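/- arXiv:1309.6102 — 7 statements merged into one kernel-verified Lean document; each statement's English description precedes it below -/
import Mathlib

section
/- Let M > 0, h ≥ 1, R > 1, and let ω ∈ C^∞(ℝ) satisfy |ω(ξ)| ≤ 1 for all ξ, ω(ξ) = 0 for |ξ| ≤ 1, and ω constant on each of the sets {ξ ≥ R} and {ξ ≤ −R}. Define λ(x,ξ) := M·ω(ξ/h)·∫₀ˣ ⟨y⟩^{-1} dy. Then for every α ∈ ℕ and every integer β ≥ 1 there exists a constant C_{α,β} > 0, depending on α, β, R and ω but not on h, M, x, ξ, such that |∂_ξ^α ∂_x^β λ(x,ξ)| ≤ M·C_{α,β}·⟨x⟩^{-β}·⟨ξ⟩_h^{-α} for all x, ξ ∈ ℝ. -/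
open MeasureTheory Real

noncomputable section

/-- The Japanese bracket `⟨x⟩ = (1 + x²)^(1/2)`. -/
def jb (x : ℝ) : ℝ := Real.sqrt (1 + x ^ 2)

/-- `⟨ξ⟩ₕ = (h² + ξ²)^(1/2)`. -/
def jbh (h ξ : ℝ) : ℝ := Real.sqrt (h ^ 2 + ξ ^ 2)

namespace Stmt1Aux

lemma one_add_sq_pos (x : ℝ) : (0:ℝ) < 1 + x ^ 2 := by positivity

lemma jb_pos (x : ℝ) : 0 < jb x := Real.sqrt_pos.2 (one_add_sq_pos x)

/-- the integrand -/
def g (x : ℝ) : ℝ := (jb x)⁻¹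

lemma sqrt_contDiff : ContDiff ℝ (⊤:ℕ∞) (fun x : ℝ => Real.sqrt (1 + x ^ 2)) := by
  rw [contDiff_iff_contDiffAt]
  intro x
  have h1 : ContDiff ℝ ((⊤:ℕ∞) : WithTop ℕ∞) (fun x : ℝ => 1 + x ^ 2) :=
    contDiff_const.add (contDiff_id.pow 2)
  exact (Real.contDiffAt_sqrt (one_add_sq_pos x).ne').comp x h1.contDiffAt

lemma g_contDiff : ContDiff ℝ (⊤:ℕ∞) g := sqrt_contDiff.inv (fun x => (jb_pos x).ne')

lemma g_cont : Continuous g := g_contDiff.continuous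

lemma g_eq (x : ℝ) : g x = (1 + x ^ 2) ^ (-(1/2) : ℝ) := by
  rw [g, jb, Real.sqrt_eq_rpow, ← Real.rpow_neg (one_add_sq_pos x).le]

lemma g_rep (k : ℕ) : ∃ p : Polynomial ℝ, p.natDegree ≤ k ∧
    ∀ x : ℝ, iteratedDeriv k g x = p.eval x * (1 + x ^ 2) ^ (-(k:ℝ) - 1/2) := by
  induction k with
  | zero =>
    refine ⟨1, by simp, fun x => ?_⟩
    rw [iteratedDeriv_zero, g_eq]
    norm_num
  | succ k ih =>
    obtain ⟨p, hdeg, hp⟩ := ih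
    refine ⟨p.derivative * (Polynomial.X ^ 2 + Polynomial.C 1) +
      Polynomial.C (-(2*(k:ℝ)+1)) * (Polynomial.X * p), ?_, fun x => ?_⟩
    · apply (Polynomial.natDegree_add_le _ _).trans
      apply max_le
      · rcases eq_or_ne p.derivative 0 with h0 | h0
        · rw [h0, zero_mul]; simp
        · have hplt : p.derivative.natDegree < p.natDegree :=
            Polynomial.natDegree_derivative_lt (fun hp0 => h0 (Polynomial.derivative_of_natDegree_zero hp0))
          have h2 : (Polynomial.X ^ 2 + Polynomial.C (1:ℝ)).natDegree ≤ 2 :=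
            (Polynomial.natDegree_add_le _ _).trans
              (by simp [Polynomial.natDegree_X_pow])
          have := Polynomial.natDegree_mul_le
            (p := p.derivative) (q := Polynomial.X ^ 2 + Polynomial.C (1:ℝ))
          omega
      · have h1 := Polynomial.natDegree_mul_le
          (p := Polynomial.C (-(2*(k:ℝ)+1))) (q := Polynomial.X * p)
        have h2 := Polynomial.natDegree_mul_le (p := (Polynomial.X : Polynomial ℝ)) (q := p)
        have h3 : (Polynomial.C (-(2*(k:ℝ)+1))).natDegree = 0 := Polynomial.natDegree_C _
        have h4 : (Polynomial.X : Polynomial ℝ).natDegree ≤ 1 := Polynomial.natDegree_X_le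
        omega
    · set e : ℝ := -(k:ℝ) - 1/2 with he
      have hpos := one_add_sq_pos x
      have hbase : HasDerivAt (fun x : ℝ => 1 + x ^ 2) (2 * x) x := by
        simpa using ((hasDerivAt_pow 2 x).const_add 1)
      have hr : HasDerivAt (fun x : ℝ => (1 + x ^ 2) ^ e)
          (2 * x * e * (1 + x ^ 2) ^ (e - 1)) x :=
        hbase.rpow_const (Or.inl hpos.ne')
      have hpd : HasDerivAt (fun y => p.eval y) (p.derivative.eval x) x := p.hasDerivAt x
      have hmul := hpd.mul hr
      rw [iteratedDeriv_succ]
      have hfun : iteratedDeriv k g = fun y => p.eval y * (1 + y ^ 2) ^ e := funext hp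
      rw [hfun, show deriv (fun y => p.eval y * (1 + y ^ 2) ^ e) x = _ from hmul.deriv]
      have hsplit : (1 + x ^ 2 : ℝ) ^ e = (1 + x ^ 2) * (1 + x ^ 2) ^ (e - 1) := by
        have h := Real.rpow_add hpos 1 (e - 1)
        rw [Real.rpow_one] at h
        rw [← h]
        congr 1
        ring
      push_cast
      rw [show -((k:ℝ)+1) - 1/2 = e - 1 by rw [he]; ring, hsplit]
      simp only [Polynomial.eval_add, Polynomial.eval_mul, Polynomial.eval_C,
        Polynomial.eval_pow, Polynomial.eval_X, Polynomial.eval_one]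
      rw [he]
      ring

lemma poly_bound (p : Polynomial ℝ) (k : ℕ) (hd : p.natDegree ≤ k) :
    ∃ C > 0, ∀ x : ℝ, |p.eval x| ≤ C * (1 + x ^ 2) ^ ((k:ℝ)/2) := by
  refine ⟨(∑ i ∈ Finset.range (k+1), |p.coeff i|) + 1, by positivity, fun x => ?_⟩
  have hpos := one_add_sq_pos x
  have h1 : p.eval x = ∑ i ∈ Finset.range (k+1), p.coeff i * x ^ i :=
    Polynomial.eval_eq_sum_range' (Nat.lt_succ_of_le hd) x
  rw [h1]
  have hb : ∀ i ∈ Finset.range (k+1),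
      |p.coeff i * x ^ i| ≤ |p.coeff i| * (1+x^2) ^ ((k:ℝ)/2) := by
    intro i hi
    rw [abs_mul, abs_pow]
    have h2 : |x| ^ i ≤ (1+x^2) ^ ((i:ℝ)/2) := by
      have hx : |x| ≤ Real.sqrt (1+x^2) := by
        rw [← Real.sqrt_sq_eq_abs]
        exact Real.sqrt_le_sqrt (by nlinarith)
      calc |x| ^ i ≤ Real.sqrt (1+x^2) ^ i := pow_le_pow_left₀ (abs_nonneg x) hx i
        _ = (1+x^2) ^ ((i:ℝ)/2) := by
          rw [Real.sqrt_eq_rpow, ← Real.rpow_natCast ((1+x^2) ^ (1/(2:ℝ))) i,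
            ← Real.rpow_mul hpos.le]
          congr 1
          ring
    have h3 : ((1:ℝ)+x^2) ^ ((i:ℝ)/2) ≤ (1+x^2) ^ ((k:ℝ)/2) := by
      apply Real.rpow_le_rpow_of_exponent_le (by nlinarith)
      have : (i:ℝ) ≤ k := by
        exact_mod_cast Nat.lt_succ_iff.mp (Finset.mem_range.mp hi)
      linarith
    exact mul_le_mul_of_nonneg_left (h2.trans h3) (abs_nonneg _)
  calc |∑ i ∈ Finset.range (k+1), p.coeff i * x ^ i|
      ≤ ∑ i ∈ Finset.range (k+1), |p.coeff i * x ^ i| := Finset.abs_sum_le_sum_abs _ _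
    _ ≤ ∑ i ∈ Finset.range (k+1), |p.coeff i| * (1+x^2) ^ ((k:ℝ)/2) := Finset.sum_le_sum hb
    _ = (∑ i ∈ Finset.range (k+1), |p.coeff i|) * (1+x^2) ^ ((k:ℝ)/2) := by
        rw [← Finset.sum_mul]
    _ ≤ ((∑ i ∈ Finset.range (k+1), |p.coeff i|) + 1) * (1+x^2) ^ ((k:ℝ)/2) := by
        apply mul_le_mul_of_nonneg_right (by linarith) (Real.rpow_nonneg hpos.le _)

lemma g_bound (k : ℕ) : ∃ C > 0, ∀ x : ℝ, |iteratedDeriv k g x| ≤ C * jb x ^ (-((k:ℝ)+1)) := by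
  obtain ⟨p, hdeg, hp⟩ := g_rep k
  obtain ⟨C, hC, hCb⟩ := poly_bound p k hdeg
  refine ⟨C, hC, fun x => ?_⟩
  have hpos := one_add_sq_pos x
  rw [hp x, abs_mul, abs_of_nonneg (Real.rpow_nonneg hpos.le _)]
  calc |p.eval x| * (1+x^2) ^ (-(k:ℝ)-1/2)
      ≤ (C * (1+x^2) ^ ((k:ℝ)/2)) * (1+x^2) ^ (-(k:ℝ)-1/2) :=
        mul_le_mul_of_nonneg_right (hCb x) (Real.rpow_nonneg hpos.le _)
    _ = C * ((1+x^2) ^ ((k:ℝ)/2) * (1+x^2) ^ (-(k:ℝ)-1/2)) := by ring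
    _ = C * jb x ^ (-((k:ℝ)+1)) := by
        rw [jb, Real.sqrt_eq_rpow, ← Real.rpow_mul hpos.le, ← Real.rpow_add hpos]
        congr 1
        ring_nf

/-- the antiderivative -/
def F (x : ℝ) : ℝ := ∫ y in (0:ℝ)..x, (jb y)⁻¹

lemma F_hasDerivAt (x : ℝ) : HasDerivAt F (g x) x := by
  apply intervalIntegral.integral_hasDerivAt_right
    ((g_cont.intervalIntegrable _ _))
    (g_cont.stronglyMeasurableAtFilter _ _)
    g_cont.continuousAt

lemma F_deriv : deriv F = g := funext fun x => (F_hasDerivAt x).deriv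

lemma F_contDiff : ContDiff ℝ (⊤:ℕ∞) F := by
  rw [contDiff_infty_iff_deriv]
  exact ⟨fun x => (F_hasDerivAt x).differentiableAt, F_deriv ▸ g_contDiff⟩

lemma iteratedDeriv_const_mul' (n : ℕ) (c : ℝ) {f : ℝ → ℝ} (hf : ContDiff ℝ (n:ℕ) f) (x : ℝ) :
    iteratedDeriv n (fun z => c * f z) x = c * iteratedDeriv n f x := by
  rw [← iteratedDerivWithin_univ, ← iteratedDerivWithin_univ]
  exact iteratedDerivWithin_const_mul (Set.mem_univ x) uniqueDiffOn_univ c hf.contDiffAt.contDiffWithinAt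

lemma itd_zero_fun : ∀ n : ℕ, iteratedDeriv n (fun _ : ℝ => (0:ℝ)) = fun _ => 0 := by
  intro n
  induction n with
  | zero => rfl
  | succ n ih => rw [iteratedDeriv_succ', deriv_const']; exact ih

lemma itd_const_eq_zero (c : ℝ) (α : ℕ) (hα : 1 ≤ α) (u : ℝ) :
    iteratedDeriv α (fun _ : ℝ => c) u = 0 := by
  obtain ⟨m, rfl⟩ : ∃ m, α = m + 1 := ⟨α - 1, by omega⟩
  rw [iteratedDeriv_succ', deriv_const', itd_zero_fun]

section Omega

variable {R : ℝ} {ω : ℝ → ℝ}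

lemma omega_vanish (hR : 1 < R)
    (hωcp : ∀ ξ₁ ξ₂ : ℝ, R ≤ ξ₁ → R ≤ ξ₂ → ω ξ₁ = ω ξ₂)
    (hωcm : ∀ ξ₁ ξ₂ : ℝ, ξ₁ ≤ -R → ξ₂ ≤ -R → ω ξ₁ = ω ξ₂)
    (α : ℕ) (hα : 1 ≤ α) (u : ℝ) (hu : R < |u|) : iteratedDeriv α ω u = 0 := by
  rcases lt_abs.mp hu with h | h
  · have hEq : Set.EqOn ω (fun _ => ω (R+1)) (Set.Ioi R) := fun v hv =>
      hωcp v (R+1) (le_of_lt hv) (by linarith)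
    rw [hEq.iteratedDeriv_of_isOpen isOpen_Ioi α h]
    exact itd_const_eq_zero _ α hα u
  · have hEq : Set.EqOn ω (fun _ => ω (-(R+1))) (Set.Iio (-R)) := fun v hv =>
      hωcm v (-(R+1)) (le_of_lt hv) (by linarith)
    have hu' : u ∈ Set.Iio (-R) := by simp only [Set.mem_Iio]; linarith
    rw [hEq.iteratedDeriv_of_isOpen isOpen_Iio α hu']
    exact itd_const_eq_zero _ α hα u

lemma omega_sup (hR : 1 < R) (hω : ContDiff ℝ (⊤ : ℕ∞) ω)
    (hωcp : ∀ ξ₁ ξ₂ : ℝ, R ≤ ξ₁ → R ≤ ξ₂ → ω ξ₁ = ω ξ₂)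
    (hωcm : ∀ ξ₁ ξ₂ : ℝ, ξ₁ ≤ -R → ξ₂ ≤ -R → ω ξ₁ = ω ξ₂)
    (α : ℕ) (hα : 1 ≤ α) :
    ∃ C > 0, ∀ u : ℝ, |iteratedDeriv α ω u| ≤ C := by
  have hcont : Continuous (iteratedDeriv α ω) :=
    hω.continuous_iteratedDeriv α (by exact_mod_cast le_top)
  obtain ⟨C, hC⟩ := (isCompact_Icc (a := -R) (b := R)).exists_bound_of_continuousOn
    hcont.continuousOn
  have hC0 : 0 ≤ C := le_trans (norm_nonneg _) (hC R ⟨by linarith, le_refl R⟩)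
  refine ⟨C + 1, by linarith, fun u => ?_⟩
  by_cases hu : |u| ≤ R
  · have := hC u ⟨neg_le_of_abs_le hu, le_of_abs_le hu⟩
    calc |iteratedDeriv α ω u| = ‖iteratedDeriv α ω u‖ := rfl
      _ ≤ C := this
      _ ≤ C + 1 := by linarith
  · rw [omega_vanish hR hωcp hωcm α hα u (lt_of_not_ge hu)]
    simp
    linarith

lemma xi_bound (hR : 1 < R) (hω : ContDiff ℝ (⊤ : ℕ∞) ω) (hωb : ∀ ξ : ℝ, |ω ξ| ≤ 1)
    (hωcp : ∀ ξ₁ ξ₂ : ℝ, R ≤ ξ₁ → R ≤ ξ₂ → ω ξ₁ = ω ξ₂)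
    (hωcm : ∀ ξ₁ ξ₂ : ℝ, ξ₁ ≤ -R → ξ₂ ≤ -R → ω ξ₁ = ω ξ₂)
    (α : ℕ) :
    ∃ C > 0, ∀ h ξ : ℝ, 1 ≤ h →
      |h⁻¹ ^ α * iteratedDeriv α ω (h⁻¹ * ξ)| ≤ C * jbh h ξ ^ (-(α:ℝ)) := by
  rcases Nat.eq_zero_or_pos α with rfl | hα
  · refine ⟨1, one_pos, fun h ξ hh => ?_⟩
    simp only [pow_zero, one_mul, iteratedDeriv_zero, Nat.cast_zero, neg_zero,
      Real.rpow_zero, mul_one]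
    exact hωb _
  · obtain ⟨C, hC, hCb⟩ := omega_sup hR hω hωcp hωcm α hα
    have hs : (0:ℝ) < Real.sqrt (1 + R^2) := Real.sqrt_pos.2 (by positivity)
    refine ⟨C * Real.sqrt (1 + R^2) ^ (α:ℝ), by positivity, fun h ξ hh => ?_⟩
    have hh0 : (0:ℝ) < h := lt_of_lt_of_le one_pos hh
    have hjpos : 0 < jbh h ξ := Real.sqrt_pos.2 (by positivity)
    by_cases hcase : |ξ| ≤ R * h
    · -- jbh h ξ ≤ h * sqrt(1+R²)
      have hle : jbh h ξ ≤ h * Real.sqrt (1 + R^2) := by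
        have h1 : Real.sqrt (h^2 * (1+R^2)) = h * Real.sqrt (1+R^2) := by
          rw [Real.sqrt_mul (by positivity), Real.sqrt_sq hh0.le]
        rw [jbh, ← h1]
        apply Real.sqrt_le_sqrt
        have h2 : ξ^2 ≤ (R*h)^2 := by
          rw [← sq_abs ξ]
          exact pow_le_pow_left₀ (abs_nonneg ξ) hcase 2
        nlinarith
      have hmono : (h * Real.sqrt (1+R^2)) ^ (-(α:ℝ)) ≤ jbh h ξ ^ (-(α:ℝ)) :=
        Real.rpow_le_rpow_of_nonpos hjpos hle (neg_nonpos.mpr (Nat.cast_nonneg α))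
      have hsplit : (h * Real.sqrt (1+R^2)) ^ (-(α:ℝ))
          = h ^ (-(α:ℝ)) * Real.sqrt (1+R^2) ^ (-(α:ℝ)) :=
        Real.mul_rpow hh0.le hs.le
      have hhinv : h⁻¹ ^ α = h ^ (-(α:ℝ)) := by
        rw [Real.rpow_neg hh0.le, Real.rpow_natCast, inv_pow]
      have hcancel : Real.sqrt (1+R^2) ^ (α:ℝ) * Real.sqrt (1+R^2) ^ (-(α:ℝ)) = 1 := by
        rw [← Real.rpow_add hs]
        simp
      calc |h⁻¹ ^ α * iteratedDeriv α ω (h⁻¹ * ξ)|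
          = h⁻¹ ^ α * |iteratedDeriv α ω (h⁻¹ * ξ)| := by
            rw [abs_mul, abs_of_nonneg (by positivity)]
        _ ≤ h⁻¹ ^ α * C := mul_le_mul_of_nonneg_left (hCb _) (by positivity)
        _ = C * Real.sqrt (1+R^2) ^ (α:ℝ) *
            (h ^ (-(α:ℝ)) * Real.sqrt (1+R^2) ^ (-(α:ℝ))) := by
            rw [hhinv]
            linear_combination (-(C * h ^ (-(α:ℝ)))) * hcancel
        _ ≤ C * Real.sqrt (1+R^2) ^ (α:ℝ) * jbh h ξ ^ (-(α:ℝ)) := by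
            rw [← hsplit]
            exact mul_le_mul_of_nonneg_left hmono (by positivity)
    · have hz : iteratedDeriv α ω (h⁻¹ * ξ) = 0 := by
        apply omega_vanish hR hωcp hωcm α hα
        rw [abs_mul, abs_inv, abs_of_pos hh0]
        rw [lt_inv_mul_iff₀ hh0, mul_comm]
        exact lt_of_not_ge hcase
      rw [hz, mul_zero, abs_zero]
      positivity

end Omega

end Stmt1Aux


/-- estimates for `∂_ξ^α ∂_x^β λ(x,ξ)`, `β ≥ 1`, where
`λ(x,ξ) = M·ω(ξ/h)·∫₀ˣ ⟨y⟩⁻¹ dy`, with a constant independent of `h`, `M`, `x`, `ξ`. -/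
theorem stmt1 (R : ℝ) (hR : 1 < R)
    (ω : ℝ → ℝ) (hω : ContDiff ℝ (⊤ : ℕ∞) ω) (hωb : ∀ ξ : ℝ, |ω ξ| ≤ 1)
    (hω0 : ∀ ξ : ℝ, |ξ| ≤ 1 → ω ξ = 0)
    (hωcp : ∀ ξ₁ ξ₂ : ℝ, R ≤ ξ₁ → R ≤ ξ₂ → ω ξ₁ = ω ξ₂)
    (hωcm : ∀ ξ₁ ξ₂ : ℝ, ξ₁ ≤ -R → ξ₂ ≤ -R → ω ξ₁ = ω ξ₂) :
    ∀ α β : ℕ, 1 ≤ β → ∃ C > 0, ∀ M h : ℝ, 0 < M → 1 ≤ h → ∀ x ξ : ℝ,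
      |iteratedDeriv α
          (fun ξ' => iteratedDeriv β
            (fun x' => M * ω (ξ' / h) * ∫ y in (0:ℝ)..x', (jb y)⁻¹) x) ξ| ≤
        M * C * jb x ^ (-(β : ℝ)) * jbh h ξ ^ (-(α : ℝ)) := by
  intro α β hβ
  obtain ⟨C1, hC1, hC1b⟩ := Stmt1Aux.g_bound (β - 1)
  obtain ⟨C2, hC2, hC2b⟩ := Stmt1Aux.xi_bound hR hω hωb hωcp hωcm α
  refine ⟨C1 * C2, by positivity, fun M h hM hh x ξ => ?_⟩
  have hh0 : (0:ℝ) < h := lt_of_lt_of_le one_pos hh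
  have hFcd : ContDiffOn ℝ (β:ℕ) Stmt1Aux.F Set.univ :=
    (Stmt1Aux.F_contDiff.of_le (by exact_mod_cast le_top)).contDiffOn
  have hstep1 : ∀ ξ' : ℝ,
      iteratedDeriv β (fun x' => M * ω (ξ' / h) * ∫ y in (0:ℝ)..x', (jb y)⁻¹) x
        = M * ω (ξ' / h) * iteratedDeriv (β - 1) Stmt1Aux.g x := by
    intro ξ'
    have h2 : iteratedDeriv β (fun x' => (M * ω (ξ' / h)) * Stmt1Aux.F x') x
        = (M * ω (ξ' / h)) * iteratedDeriv β Stmt1Aux.F x := by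
      exact Stmt1Aux.iteratedDeriv_const_mul' β _ (Stmt1Aux.F_contDiff.of_le (by exact_mod_cast le_top)) x
    have h3 : iteratedDeriv β Stmt1Aux.F x = iteratedDeriv (β - 1) Stmt1Aux.g x := by
      obtain ⟨m, rfl⟩ : ∃ m, β = m + 1 := ⟨β - 1, by omega⟩
      simp only [Nat.add_sub_cancel]
      rw [iteratedDeriv_succ', Stmt1Aux.F_deriv]
    rw [← h3]
    exact h2
  have hfun2 : (fun ξ' => iteratedDeriv β
      (fun x' => M * ω (ξ' / h) * ∫ y in (0:ℝ)..x', (jb y)⁻¹) x)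
      = fun ξ' => (M * iteratedDeriv (β - 1) Stmt1Aux.g x) * ω (h⁻¹ * ξ') := by
    funext ξ'
    rw [hstep1 ξ', div_eq_inv_mul]
    ring
  rw [hfun2]
  have hωα : ContDiff ℝ (α:ℕ) ω := hω.of_le (by exact_mod_cast le_top)
  have hstep2 : iteratedDeriv α
      (fun ξ' => (M * iteratedDeriv (β - 1) Stmt1Aux.g x) * ω (h⁻¹ * ξ')) ξ
      = (M * iteratedDeriv (β - 1) Stmt1Aux.g x) *
        (h⁻¹ ^ α * iteratedDeriv α ω (h⁻¹ * ξ)) := by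
    have hcomp : ContDiffOn ℝ (α:ℕ) (fun ξ' : ℝ => ω (h⁻¹ * ξ')) Set.univ :=
      (hωα.comp (contDiff_const.mul contDiff_id)).contDiffOn
    have h4 : iteratedDeriv α
        (fun ξ' => (M * iteratedDeriv (β - 1) Stmt1Aux.g x) * ω (h⁻¹ * ξ')) ξ
        = (M * iteratedDeriv (β - 1) Stmt1Aux.g x) *
          iteratedDeriv α (fun ξ' : ℝ => ω (h⁻¹ * ξ')) ξ := by
      exact Stmt1Aux.iteratedDeriv_const_mul' α _
        (hωα.comp (contDiff_const.mul contDiff_id)) ξ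
    rw [h4, iteratedDeriv_comp_const_mul hωα h⁻¹]
  rw [hstep2]
  set A := iteratedDeriv (β - 1) Stmt1Aux.g x with hA
  have hcast : -(((β - 1 : ℕ):ℝ) + 1) = -(β:ℝ) := by
    rw [Nat.cast_sub hβ]
    push_cast
    ring
  have h1 : |A| ≤ C1 * jb x ^ (-(β:ℝ)) := by
    have := hC1b x
    rwa [hcast] at this
  have h2 := hC2b h ξ hh
  have hjbnn : (0:ℝ) ≤ jb x ^ (-(β:ℝ)) := Real.rpow_nonneg (Stmt1Aux.jb_pos x).le _
  have hjbhnn : (0:ℝ) ≤ jbh h ξ ^ (-(α:ℝ)) :=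
    Real.rpow_nonneg (Real.sqrt_nonneg _) _
  calc |M * A * (h⁻¹ ^ α * iteratedDeriv α ω (h⁻¹ * ξ))|
      = M * (|A| * |h⁻¹ ^ α * iteratedDeriv α ω (h⁻¹ * ξ)|) := by
        rw [abs_mul, abs_mul, abs_of_pos hM]
        ring
    _ ≤ M * ((C1 * jb x ^ (-(β:ℝ))) * (C2 * jbh h ξ ^ (-(α:ℝ)))) := by
        apply mul_le_mul_of_nonneg_left _ hM.le
        apply mul_le_mul h1 h2 (abs_nonneg _)
        exact mul_nonneg hC1.le hjbnn
    _ = M * (C1 * C2) * jb x ^ (-(β:ℝ)) * jbh h ξ ^ (-(α:ℝ)) := by ring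
end
end

section
/- Let M > 0, h ≥ 1, R > 1, and let ω ∈ C^∞(ℝ) satisfy |ω(ξ)| ≤ 1 for all ξ, ω(ξ) = 0 for |ξ| ≤ 1, and ω constant on each of the sets {ξ ≥ R} and {ξ ≤ −R}. Define λ(x,ξ) := M·ω(ξ/h)·∫₀ˣ ⟨y⟩^{-1} dy. Then for every integer α ≥ 1 there exists a constant C'_{α,R} > 0, depending on α, R and ω but not on h, M, x, ξ, such that |∂_ξ^α λ(x,ξ)| ≤ M·C'_{α,R}·⟨ξ⟩_h^{-α}·(1 + ln⟨x⟩·χ_{E_{h,R}}(ξ)) for all x, ξ ∈ ℝ, where χ_{E_{h,R}} is the characteristic function of the set E_{h,R} = {ξ ∈ ℝ : h ≤ |ξ| ≤ hR}. -/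
open MeasureTheory Real

noncomputable section

private lemma iter_const_zero : ∀ (n : ℕ) (c : ℝ),
    iteratedDeriv (n + 1) (fun _ : ℝ => c) = fun _ => 0 := by
  intro n
  induction n with
  | zero =>
    intro c; funext t
    simp [iteratedDeriv_one]
  | succ n ih =>
    intro c
    rw [iteratedDeriv_succ', deriv_const']
    exact ih 0

/-- estimates for `∂_ξ^α λ(x,ξ)`, `α ≥ 1`, where
`λ(x,ξ) = M·ω(ξ/h)·∫₀ˣ ⟨y⟩⁻¹ dy`, with a constant independent of `h`, `M`, `x`, `ξ`,
involving the characteristic function of `E_{h,R} = {ξ : h ≤ |ξ| ≤ hR}`. -/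
theorem stmt2 (R : ℝ) (hR : 1 < R)
    (ω : ℝ → ℝ) (hω : ContDiff ℝ (⊤ : ℕ∞) ω) (hωb : ∀ ξ : ℝ, |ω ξ| ≤ 1)
    (hω0 : ∀ ξ : ℝ, |ξ| ≤ 1 → ω ξ = 0)
    (hωcp : ∀ ξ₁ ξ₂ : ℝ, R ≤ ξ₁ → R ≤ ξ₂ → ω ξ₁ = ω ξ₂)
    (hωcm : ∀ ξ₁ ξ₂ : ℝ, ξ₁ ≤ -R → ξ₂ ≤ -R → ω ξ₁ = ω ξ₂) :
    ∀ α : ℕ, 1 ≤ α → ∃ C > 0, ∀ M h : ℝ, 0 < M → 1 ≤ h → ∀ x ξ : ℝ,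
      |iteratedDeriv α
          (fun ξ' => M * ω (ξ' / h) * ∫ y in (0:ℝ)..x, (jb y)⁻¹) ξ| ≤
        M * C * jbh h ξ ^ (-(α : ℝ)) *
          (1 + Real.log (jb x) *
            Set.indicator {ζ : ℝ | h ≤ |ζ| ∧ |ζ| ≤ h * R} (fun _ => (1:ℝ)) ξ) := by
  intro α hα
  obtain ⟨n, rfl⟩ := Nat.exists_eq_succ_of_ne_zero (by omega : α ≠ 0)
  set D := iteratedDeriv (n + 1) ω with hD
  have hDcont : Continuous D := hω.continuous_iteratedDeriv (n + 1) (by exact_mod_cast le_top)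
  obtain ⟨K, hK⟩ := (isCompact_Icc : IsCompact (Set.Icc (-R) R)).exists_bound_of_continuousOn
    hDcont.continuousOn
  set S := Real.sqrt (1 + R ^ 2) with hSdef
  have hS1 : 1 ≤ S := Real.one_le_sqrt.2 (by nlinarith)
  have hS0 : 0 < S := lt_of_lt_of_le one_pos hS1
  set K' := |K| + 1 with hK'def
  have hK'0 : 0 < K' := by positivity
  -- zero derivative facts
  have hD0 : ∀ u : ℝ, |u| < 1 → D u = 0 := by
    intro u hu
    have hev : ω =ᶠ[nhds u] fun _ => (0 : ℝ) := by
      filter_upwards [(isOpen_lt continuous_abs continuous_const).mem_nhds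
        (show u ∈ {v : ℝ | |v| < 1} from hu)] with v hv
      exact hω0 v (le_of_lt hv)
    rw [hD, Filter.EventuallyEq.iteratedDeriv_eq _ hev, iter_const_zero]
  have hDp : ∀ u : ℝ, R < u → D u = 0 := by
    intro u hu
    have hev : ω =ᶠ[nhds u] fun _ => ω (R + 1) := by
      filter_upwards [(isOpen_lt continuous_const continuous_id).mem_nhds
        (show u ∈ {v : ℝ | R < v} from hu)] with v hv
      exact hωcp v (R + 1) (le_of_lt hv) (by linarith)
    rw [hD, Filter.EventuallyEq.iteratedDeriv_eq _ hev, iter_const_zero]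
  have hDm : ∀ u : ℝ, u < -R → D u = 0 := by
    intro u hu
    have hev : ω =ᶠ[nhds u] fun _ => ω (-(R + 1)) := by
      filter_upwards [(isOpen_lt continuous_id continuous_const).mem_nhds
        (show u ∈ {v : ℝ | v < -R} from hu)] with v hv
      exact hωcm v (-(R + 1)) (le_of_lt hv) (by linarith)
    rw [hD, Filter.EventuallyEq.iteratedDeriv_eq _ hev, iter_const_zero]
  have hDb : ∀ u : ℝ, |D u| ≤ K' := by
    intro u
    rcases le_or_gt |u| R with hle | hlt
    · have hmem : u ∈ Set.Icc (-R) R := by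
        rcases abs_le.1 hle with ⟨h1, h2⟩; exact Set.mem_Icc.2 ⟨h1, h2⟩
      calc |D u| = ‖D u‖ := (Real.norm_eq_abs _).symm
        _ ≤ K := hK u hmem
        _ ≤ K' := by rw [hK'def]; have := le_abs_self K; linarith
    · rcases lt_abs.1 hlt with h1 | h1
      · rw [hDp u h1]; simpa using hK'0.le
      · rw [hDm u (by linarith)]; simpa using hK'0.le
  refine ⟨K' * S ^ (n + 1), by positivity, ?_⟩
  intro M h hM hh x ξ
  have hh0 : 0 < h := lt_of_lt_of_le one_pos hh
  set L := Real.log (jb x) with hLdef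
  have hjb1 : ∀ y : ℝ, 1 ≤ jb y := by
    intro y; rw [jb]; exact Real.one_le_sqrt.2 (by nlinarith [sq_nonneg y])
  have hL0 : 0 ≤ L := Real.log_nonneg (hjb1 x)
  set I := ∫ y in (0 : ℝ)..x, (jb y)⁻¹ with hIdef
  -- compute the integral
  have hjbpos : ∀ y : ℝ, 0 < jb y := fun y => lt_of_lt_of_le one_pos (hjb1 y)
  have hcontjb : Continuous fun y : ℝ => (jb y)⁻¹ := by
    have : Continuous jb := (continuous_const.add (continuous_pow 2)).sqrt
    exact this.inv₀ fun y => (hjbpos y).ne'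
  have hI : I = Real.arsinh x := by
    rw [hIdef, intervalIntegral.integral_eq_sub_of_hasDerivAt
      (fun y _ => by simpa [jb] using Real.hasDerivAt_arsinh y)
      (hcontjb.intervalIntegrable 0 x), Real.arsinh_zero, sub_zero]
  have hlog2 : Real.log 2 ≤ 1 := by
    have := Real.log_le_sub_one_of_pos (by norm_num : (0:ℝ) < 2); linarith
  have harsinh_le : ∀ t : ℝ, Real.arsinh t ≤ Real.log 2 + Real.log (jb t) := by
    intro t
    have hs0 : 0 ≤ Real.sqrt (1 + t ^ 2) := Real.sqrt_nonneg _
    have hts : |t| < Real.sqrt (1 + t ^ 2) := by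
      rw [show |t| = Real.sqrt (t ^ 2) by rw [Real.sqrt_sq_eq_abs]]
      exact Real.sqrt_lt_sqrt (sq_nonneg t) (by linarith)
    have hpos : 0 < t + Real.sqrt (1 + t ^ 2) := by
      have := neg_abs_le t; linarith
    calc Real.arsinh t = Real.log (t + Real.sqrt (1 + t ^ 2)) := rfl
      _ ≤ Real.log (2 * jb t) := by
          apply Real.log_le_log hpos
          have := le_abs_self t
          rw [jb]; linarith
      _ = Real.log 2 + Real.log (jb t) := Real.log_mul two_ne_zero (hjbpos t).ne'
  have hIabs : |I| ≤ 1 + L := by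
    rw [hI, abs_le]
    have h1 := harsinh_le x
    have h2 := harsinh_le (-x)
    rw [Real.arsinh_neg, show jb (-x) = jb x by simp [jb]] at h2
    constructor <;> [linarith; linarith]
  -- rewrite the iterated derivative
  have hcd : ContDiff ℝ ((n + 1 : ℕ) : ℕ∞) fun t : ℝ => ω (h⁻¹ * t) :=
    (hω.of_le (by exact_mod_cast le_top)).comp (contDiff_const.mul contDiff_id)
  have e1 : (fun ξ' => M * ω (ξ' / h) * I) = fun ξ' : ℝ => (M * I) * ω (h⁻¹ * ξ') := by
    funext t; rw [div_eq_inv_mul]; ring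
  have key : iteratedDeriv (n + 1) (fun ξ' => M * ω (ξ' / h) * I) ξ
      = (M * I) * ((h⁻¹) ^ (n + 1) * D (h⁻¹ * ξ)) := by
    rw [e1, ← iteratedDerivWithin_univ,
      iteratedDerivWithin_const_mul (Set.mem_univ ξ) uniqueDiffOn_univ (M * I) hcd.contDiffWithinAt,
      iteratedDerivWithin_univ, iteratedDeriv_comp_const_mul (hω.of_le (by exact_mod_cast le_top)) h⁻¹]
  have hjbhpos : 0 < jbh h ξ := Real.sqrt_pos.2 (by positivity)
  have hrpow : jbh h ξ ^ (-((n + 1 : ℕ) : ℝ)) = (jbh h ξ ^ (n + 1 : ℕ))⁻¹ := by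
    rw [Real.rpow_neg hjbhpos.le, Real.rpow_natCast]
  have habs : |(M * I) * ((h⁻¹) ^ (n + 1) * D (h⁻¹ * ξ))|
      = M * |I| * (h⁻¹) ^ (n + 1) * |D (h⁻¹ * ξ)| := by
    rw [abs_mul, abs_mul, abs_mul, abs_of_pos hM,
      abs_of_nonneg (by positivity : (0:ℝ) ≤ (h⁻¹) ^ (n + 1))]
    ring
  rw [key, habs, hrpow]
  by_cases hmem : ξ ∈ {ζ : ℝ | h ≤ |ζ| ∧ |ζ| ≤ h * R}
  · rw [Set.indicator_of_mem hmem]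
    have hjle : jbh h ξ ≤ h * S := by
      have hx2 : ξ ^ 2 ≤ h ^ 2 * R ^ 2 := by
        have h1 : |ξ| ^ 2 ≤ (h * R) ^ 2 := pow_le_pow_left₀ (abs_nonneg ξ) hmem.2 2
        rw [sq_abs] at h1; nlinarith
      rw [jbh]
      calc Real.sqrt (h ^ 2 + ξ ^ 2) ≤ Real.sqrt (h ^ 2 * (1 + R ^ 2)) :=
            Real.sqrt_le_sqrt (by nlinarith)
        _ = h * S := by
            rw [Real.sqrt_mul (by positivity), Real.sqrt_sq hh0.le, hSdef]
    have hjpow : (0:ℝ) < jbh h ξ ^ (n + 1) := pow_pos hjbhpos _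
    have hinv : (h⁻¹) ^ (n + 1) ≤ S ^ (n + 1) * (jbh h ξ ^ (n + 1))⁻¹ := by
      rw [inv_pow, ← div_eq_mul_inv, le_div_iff₀ hjpow, inv_mul_le_iff₀ (pow_pos hh0 _)]
      calc jbh h ξ ^ (n + 1) ≤ (h * S) ^ (n + 1) :=
            pow_le_pow_left₀ hjbhpos.le hjle _
        _ = h ^ (n + 1) * S ^ (n + 1) := mul_pow h S (n + 1)
    have step : M * |I| * (h⁻¹) ^ (n + 1) * |D (h⁻¹ * ξ)|
        ≤ M * (1 + L) * (S ^ (n + 1) * (jbh h ξ ^ (n + 1))⁻¹) * K' := by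
      have s1 : M * |I| * (h⁻¹) ^ (n + 1) * |D (h⁻¹ * ξ)|
          ≤ M * (1 + L) * (h⁻¹) ^ (n + 1) * |D (h⁻¹ * ξ)| := by
        have := mul_le_mul_of_nonneg_left hIabs hM.le
        have hnn : (0:ℝ) ≤ (h⁻¹) ^ (n + 1) * |D (h⁻¹ * ξ)| := by positivity
        nlinarith [abs_nonneg (D (h⁻¹ * ξ)), pow_nonneg (inv_nonneg.2 hh0.le) (n + 1)]
      have s2 : M * (1 + L) * (h⁻¹) ^ (n + 1) * |D (h⁻¹ * ξ)|
          ≤ M * (1 + L) * (S ^ (n + 1) * (jbh h ξ ^ (n + 1))⁻¹) * |D (h⁻¹ * ξ)| := by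
        have hnn : (0:ℝ) ≤ M * (1 + L) := by positivity
        have := mul_le_mul_of_nonneg_left hinv hnn
        exact mul_le_mul_of_nonneg_right (by linarith [this]) (abs_nonneg _)
      have s3 : M * (1 + L) * (S ^ (n + 1) * (jbh h ξ ^ (n + 1))⁻¹) * |D (h⁻¹ * ξ)|
          ≤ M * (1 + L) * (S ^ (n + 1) * (jbh h ξ ^ (n + 1))⁻¹) * K' := by
        apply mul_le_mul_of_nonneg_left (hDb _)
        positivity
      linarith
    calc M * |I| * (h⁻¹) ^ (n + 1) * |D (h⁻¹ * ξ)|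
        ≤ M * (1 + L) * (S ^ (n + 1) * (jbh h ξ ^ (n + 1))⁻¹) * K' := step
      _ = M * (K' * S ^ (n + 1)) * (jbh h ξ ^ (n + 1))⁻¹ * (1 + L * 1) := by ring
  · rw [Set.indicator_of_notMem hmem]
    have hDz : D (h⁻¹ * ξ) = 0 := by
      rcases not_and_or.1 hmem with hlt | hgt
      · push_neg at hlt
        apply hD0
        rw [abs_mul, abs_of_pos (inv_pos.2 hh0)]
        calc h⁻¹ * |ξ| < h⁻¹ * h := by
              exact mul_lt_mul_of_pos_left hlt (inv_pos.2 hh0)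
          _ = 1 := inv_mul_cancel₀ hh0.ne'
      · push_neg at hgt
        have hu : R < h⁻¹ * |ξ| := by
          have := mul_lt_mul_of_pos_left hgt (inv_pos.2 hh0)
          rwa [show h⁻¹ * (h * R) = R by field_simp] at this
        rw [show h⁻¹ * |ξ| = |h⁻¹ * ξ| by rw [abs_mul, abs_of_pos (inv_pos.2 hh0)]] at hu
        rcases lt_abs.1 hu with h1 | h1
        · exact hDp _ h1
        · exact hDm _ (by linarith)
    rw [hDz]
    simp only [abs_zero, mul_zero, zero_mul, mul_one]
    positivity

end
end

section
/- Let M > 0, h ≥ 1, R > 1, and let ω ∈ C^∞(ℝ) satisfy |ω(ξ)| ≤ 1 for all ξ, ω(ξ) = 0 for |ξ| ≤ 1, and ω constant on each of {ξ ≥ R} and {ξ ≤ −R}. Define λ(x,ξ) := M·ω(ξ/h)·∫₀ˣ ⟨y⟩^{-1} dy. Then for every integer α ≥ 1 there exists C_α > 0 (depending on α, M, R, ω but not on h, x, ξ) such that, for either choice of sign, |∂_ξ^α e^{±λ(x,ξ)}| ≤ C_α·(1 + ln⟨x⟩·χ_{E_{h,R}}(ξ))^α·⟨ξ⟩_h^{−α}·e^{±λ(x,ξ)}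 for all x, ξ ∈ ℝ, where χ_{E_{h,R}} is the characteristic function of E_{h,R} = {ξ ∈ ℝ : h ≤ |ξ| ≤ hR}. -/
open MeasureTheory Real

noncomputable section

lemma one_le_jb (x : ℝ) : 1 ≤ jb x := by
  unfold jb
  rw [Real.one_le_sqrt]
  nlinarith [sq_nonneg x]

lemma iterDeriv_const {n : ℕ} (hn : n ≠ 0) : ∀ c : ℝ, iteratedDeriv n (fun _ : ℝ => c) = fun _ => 0 := by
  induction n with
  | zero => exact absurd rfl hn
  | succ m ih =>
    intro c
    rw [iteratedDeriv_succ']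
    have hd : deriv (fun _ : ℝ => c) = fun _ : ℝ => (0:ℝ) := by
      funext z; exact deriv_const z c
    rw [hd]
    rcases Nat.eq_zero_or_pos m with hm | hm
    · subst hm; simp
    · exact ih hm.ne' 0

lemma integral_jb_inv (x : ℝ) : ∫ y in (0:ℝ)..x, (jb y)⁻¹ = Real.arsinh x := by
  have hcont : Continuous fun y : ℝ => (jb y)⁻¹ := by
    apply Continuous.inv₀
    · exact (continuous_const.add (continuous_pow 2)).sqrt
    · intro y
      have := one_le_jb y
      linarith
  have key := intervalIntegral.integral_eq_sub_of_hasDerivAt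
    (f := Real.arsinh) (f' := fun y : ℝ => (jb y)⁻¹)
    (fun t _ => by simpa [jb] using Real.hasDerivAt_arsinh t)
    (hcont.intervalIntegrable 0 x)
  rw [key, Real.arsinh_zero, sub_zero]

lemma arsinh_le_aux {x : ℝ} (hx : 0 ≤ x) : Real.arsinh x ≤ 1 + Real.log (jb x) := by
  have h1 : 1 ≤ jb x := one_le_jb x
  have hxjb : x ≤ jb x := by
    calc x ≤ |x| := le_abs_self x
    _ = √(x^2) := (Real.sqrt_sq_eq_abs x).symm
    _ ≤ √(1+x^2) := Real.sqrt_le_sqrt (by nlinarith)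
  have hlog2 : Real.log 2 ≤ 1 := by
    rw [Real.log_le_iff_le_exp (by norm_num)]
    have := Real.exp_one_gt_d9
    linarith
  have harsinh : Real.arsinh x = Real.log (x + jb x) := by
    conv_lhs => rw [← Real.log_exp (Real.arsinh x)]
    rw [Real.exp_arsinh]
    rfl
  rw [harsinh]
  calc Real.log (x + jb x) ≤ Real.log (2 * jb x) := by
        apply Real.log_le_log (by linarith) (by linarith)
    _ = Real.log 2 + Real.log (jb x) := Real.log_mul (by norm_num) (by linarith)
    _ ≤ 1 + Real.log (jb x) := by linarith

lemma abs_arsinh_le (x : ℝ) : |Real.arsinh x| ≤ 1 + Real.log (jb x) := by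
  rcases le_or_gt 0 x with hx | hx
  · rw [abs_of_nonneg (Real.arsinh_nonneg_iff.mpr hx)]
    exact arsinh_le_aux hx
  · have hjb : jb (-x) = jb x := by unfold jb; ring_nf
    rw [abs_of_nonpos (Real.arsinh_nonpos_iff.mpr hx.le), ← Real.arsinh_neg, ← hjb]
    exact arsinh_le_aux (by linarith)


set_option maxHeartbeats 2000000 in
/-- estimates for `∂_ξ^α e^{±λ(x,ξ)}`, `α ≥ 1`, where
`λ(x,ξ) = M·ω(ξ/h)·∫₀ˣ ⟨y⟩⁻¹ dy`; the constant may depend on `α, M, R, ω` but not on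
`h, x, ξ`. -/
theorem stmt5 (M R : ℝ) (hM : 0 < M) (hR : 1 < R)
    (ω : ℝ → ℝ) (hω : ContDiff ℝ (⊤ : ℕ∞) ω) (hωb : ∀ ξ : ℝ, |ω ξ| ≤ 1)
    (hω0 : ∀ ξ : ℝ, |ξ| ≤ 1 → ω ξ = 0)
    (hωcp : ∀ ξ₁ ξ₂ : ℝ, R ≤ ξ₁ → R ≤ ξ₂ → ω ξ₁ = ω ξ₂)
    (hωcm : ∀ ξ₁ ξ₂ : ℝ, ξ₁ ≤ -R → ξ₂ ≤ -R → ω ξ₁ = ω ξ₂) :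
    ∀ α : ℕ, 1 ≤ α → ∃ C > 0, ∀ h : ℝ, 1 ≤ h → ∀ x ξ : ℝ,
      ∀ s : ℝ, s = 1 ∨ s = -1 →
        |iteratedDeriv α
            (fun ξ' => Real.exp
              (s * (M * ω (ξ' / h) * ∫ y in (0:ℝ)..x, (jb y)⁻¹))) ξ| ≤
          C * (1 + Real.log (jb x) *
              Set.indicator {ζ : ℝ | h ≤ |ζ| ∧ |ζ| ≤ h * R} (fun _ => (1:ℝ)) ξ) ^ α *
            jbh h ξ ^ (-(α : ℝ)) *
            Real.exp (s * (M * ω (ξ / h) * ∫ y in (0:ℝ)..x, (jb y)⁻¹)) := by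
  intro α hα
  have hωnat : ∀ m : ℕ, ContDiff ℝ (m : ℕ∞) ω := fun m => hω.of_le (by exact_mod_cast le_top)
  -- derivatives of ω vanish outside [-R, R]
  have hωvanish : ∀ i : ℕ, i ≠ 0 → ∀ ζ : ℝ, ζ ∉ Set.Icc (-R) R → iteratedDeriv i ω ζ = 0 := by
    intro i hi ζ hζ
    rw [Set.mem_Icc, not_and_or, not_le, not_le] at hζ
    rcases hζ with hζ | hζ
    · have hev : ω =ᶠ[nhds ζ] (fun _ => ω ζ) :=
        Filter.eventually_of_mem (isOpen_Iio.mem_nhds hζ)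
          (fun ζ' hζ' => hωcm ζ' ζ (le_of_lt hζ') (le_of_lt hζ))
      rw [hev.iteratedDeriv_eq i, iterDeriv_const hi]
    · have hev : ω =ᶠ[nhds ζ] (fun _ => ω ζ) :=
        Filter.eventually_of_mem (isOpen_Ioi.mem_nhds hζ)
          (fun ζ' hζ' => hωcp ζ' ζ (le_of_lt hζ') (le_of_lt hζ))
      rw [hev.iteratedDeriv_eq i, iterDeriv_const hi]
  -- uniform bound on derivatives of ω
  have hbound : ∀ i : ℕ, ∃ Ci : ℝ, ∀ ζ : ℝ, |iteratedDeriv i ω ζ| ≤ Ci := by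
    intro i
    rcases Nat.eq_zero_or_pos i with h0 | h1
    · subst h0
      exact ⟨1, by simpa using hωb⟩
    · have hcont : Continuous (iteratedDeriv i ω) := hω.continuous_iteratedDeriv i (by
        exact_mod_cast le_top)
      have hcs : HasCompactSupport (iteratedDeriv i ω) :=
        HasCompactSupport.intro isCompact_Icc (hωvanish i h1.ne')
      obtain ⟨Ci, hCi⟩ := hcs.exists_bound_of_continuous hcont
      exact ⟨Ci, fun ζ => by simpa [Real.norm_eq_abs] using hCi ζ⟩
  choose g hg using hbound
  obtain ⟨A, hA0, hA⟩ : ∃ A : ℝ, 0 ≤ A ∧ ∀ i : ℕ, i ≤ α → ∀ ζ : ℝ, |iteratedDeriv i ω ζ| ≤ A := by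
    refine ⟨∑ i ∈ Finset.range (α + 1), max (g i) 0,
      Finset.sum_nonneg fun i _ => le_max_right _ _, fun i hi ζ => ?_⟩
    refine le_trans (le_trans (hg i ζ) (le_max_left (g i) 0)) ?_
    exact Finset.single_le_sum (f := fun j => max (g j) 0) (fun j _ => le_max_right (g j) 0)
      (Finset.mem_range.mpr (Nat.lt_succ_of_le hi))
  obtain ⟨B, hB1, hBdef⟩ : ∃ B : ℝ, 1 ≤ B ∧ B = 1 + M * A := ⟨1 + M * A, by nlinarith, rfl⟩
  obtain ⟨K, hK1, hKdef⟩ : ∃ K : ℝ, 1 ≤ K ∧ K = Real.sqrt (1 + R ^ 2) :=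
    ⟨Real.sqrt (1 + R ^ 2), by rw [Real.one_le_sqrt]; nlinarith, rfl⟩
  have hB0 : (0:ℝ) < B := lt_of_lt_of_le one_pos hB1
  have hK0 : (0:ℝ) < K := lt_of_lt_of_le one_pos hK1
  refine ⟨(α.factorial : ℝ) * B ^ α * K ^ α,
    mul_pos (mul_pos (Nat.cast_pos.mpr α.factorial_pos) (pow_pos hB0 α)) (pow_pos hK0 α), ?_⟩
  intro h hh x ξ s hs
  have hh0 : (0:ℝ) < h := lt_of_lt_of_le one_pos hh
  set I : ℝ := ∫ y in (0:ℝ)..x, (jb y)⁻¹ with hIdef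
  set L : ℝ := Real.log (jb x) with hLdef
  have hL0 : 0 ≤ L := Real.log_nonneg (one_le_jb x)
  have habsI : |I| ≤ 1 + L := by
    rw [hIdef, integral_jb_inv]; exact abs_arsinh_le x
  have hs1 : |s| = 1 := by rcases hs with rfl | rfl <;> simp
  set c : ℝ := s * (M * I) with hcdef
  have hcabs : |c| ≤ M * (1 + L) := by
    rw [hcdef, abs_mul, hs1, one_mul, abs_mul, abs_of_pos hM]
    exact mul_le_mul_of_nonneg_left habsI hM.le
  set f : ℝ → ℝ := fun ξ' => c * ω (ξ' / h) with hfdef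
  have hexp_eq : ∀ ζ : ℝ, s * (M * ω (ζ / h) * I) = f ζ := by
    intro ζ; rw [hfdef, hcdef]; ring
  have hfun : (fun ξ' => Real.exp (s * (M * ω (ξ' / h) * I))) = Real.exp ∘ f := by
    funext ζ
    simp only [Function.comp_apply, hexp_eq ζ]
  set Jb : ℝ := jbh h ξ with hJdef
  have hJ0 : 0 < Jb := by
    rw [hJdef]; unfold jbh
    apply Real.sqrt_pos.mpr; nlinarith
  have hrpow : Jb ^ (-(α : ℝ)) = (Jb ^ α)⁻¹ := by
    rw [Real.rpow_neg hJ0.le, Real.rpow_natCast]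
  have hjble : |ξ| ≤ h * R → Jb ≤ K * h := by
    intro hE2
    rw [hJdef, hKdef]; unfold jbh
    have h1 : √(1 + R ^ 2) * h = √((1 + R ^ 2) * h ^ 2) := by
      rw [Real.sqrt_mul (by positivity), Real.sqrt_sq hh0.le]
    rw [h1]
    apply Real.sqrt_le_sqrt
    have h2 : ξ ^ 2 ≤ (h * R) ^ 2 := by
      have h3 := sq_abs ξ
      nlinarith [abs_nonneg ξ]
    nlinarith
  clear_value I L c f Jb
  clear hIdef hLdef hJdef hKdef
  rcases le_or_gt h |ξ| with hE1 | hoff1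
  rcases le_or_gt |ξ| (h * R) with hE2 | hoff2
  · -- main case : ξ ∈ E
    have hmemE : ξ ∈ {ζ : ℝ | h ≤ |ζ| ∧ |ζ| ≤ h * R} := ⟨hE1, hE2⟩
    rw [Set.indicator_of_mem hmemE, mul_one]
    have hfC : ContDiff ℝ (α : ℕ∞) f := by
      rw [hfdef]
      exact contDiff_const.mul ((hωnat α).comp (contDiff_id.div_const h))
    have hgC : ContDiff ℝ (α : ℕ∞) Real.exp := Real.contDiff_exp
    have hC : ∀ i, i ≤ α → ‖iteratedFDeriv ℝ i Real.exp (f ξ)‖ ≤ Real.exp (f ξ) := by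
      intro i _
      rw [norm_iteratedFDeriv_eq_norm_iteratedDeriv, iteratedDeriv_eq_iterate,
        Real.iter_deriv_exp, Real.norm_eq_abs, abs_of_pos (Real.exp_pos _)]
    have hD : ∀ i, 1 ≤ i → i ≤ α →
        ‖iteratedFDeriv ℝ i f ξ‖ ≤ (B * (1 + L) / h) ^ i := by
      intro i hi1 hiα
      rw [norm_iteratedFDeriv_eq_norm_iteratedDeriv, Real.norm_eq_abs]
      have hstep1 : iteratedDeriv i f ξ = c * iteratedDeriv i (fun t => ω (h⁻¹ * t)) ξ := by
        have hf2 : f = fun ξ' => c * (fun t => ω (h⁻¹ * t)) ξ' := by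
          rw [hfdef]; funext ζ; simp only [div_eq_inv_mul]
        rw [hf2]
        simp only [← iteratedDerivWithin_univ]
        exact iteratedDerivWithin_const_mul (Set.mem_univ ξ) uniqueDiffOn_univ c
          (((hωnat i).comp (contDiff_const.mul contDiff_id)).contDiffWithinAt)
      have hstep2 : iteratedDeriv i (fun t => ω (h⁻¹ * t)) ξ
          = (h⁻¹) ^ i * iteratedDeriv i ω (h⁻¹ * ξ) := by
        rw [iteratedDeriv_comp_const_mul (hωnat i) h⁻¹]
      rw [hstep1, hstep2, abs_mul, abs_mul, abs_pow, abs_of_pos (inv_pos.mpr hh0)]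
      have hωb' : |iteratedDeriv i ω (h⁻¹ * ξ)| ≤ A := hA i hiα _
      have hinv : (0:ℝ) ≤ (h⁻¹) ^ i := by positivity
      have hc' : |c| * ((h⁻¹) ^ i * |iteratedDeriv i ω (h⁻¹ * ξ)|)
          ≤ M * (1 + L) * A * (h⁻¹) ^ i := by
        have h4 := mul_le_mul hcabs (mul_le_mul_of_nonneg_left hωb' hinv)
          (by positivity) (by positivity)
        calc |c| * ((h⁻¹) ^ i * |iteratedDeriv i ω (h⁻¹ * ξ)|)
            ≤ M * (1 + L) * ((h⁻¹) ^ i * A) := h4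
          _ = M * (1 + L) * A * (h⁻¹) ^ i := by ring
      refine le_trans hc' ?_
      have hpow : M * (1 + L) * A ≤ (B * (1 + L)) ^ i := by
        have hbase : 1 ≤ B * (1 + L) := by nlinarith
        have h2 : B * (1 + L) ≤ (B * (1 + L)) ^ i := le_self_pow₀ hbase (by omega)
        nlinarith
      calc M * (1 + L) * A * (h⁻¹) ^ i ≤ (B * (1 + L)) ^ i * (h⁻¹) ^ i :=
            mul_le_mul_of_nonneg_right hpow hinv
        _ = (B * (1 + L) / h) ^ i := by rw [← mul_pow]; ring_nf
    have key := norm_iteratedFDeriv_comp_le hgC hfC (by norm_cast) ξ hC hD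
    have hLHS : |iteratedDeriv α (fun ξ' => Real.exp (s * (M * ω (ξ' / h) * I))) ξ|
        = ‖iteratedFDeriv ℝ α (Real.exp ∘ f) ξ‖ := by
      rw [hfun, norm_iteratedFDeriv_eq_norm_iteratedDeriv, Real.norm_eq_abs]
    rw [hLHS, hexp_eq ξ, hrpow]
    have hDα : (B * (1 + L) / h) ^ α ≤ B ^ α * K ^ α * (1 + L) ^ α * (Jb ^ α)⁻¹ := by
      have heq : B ^ α * K ^ α * (1 + L) ^ α * (Jb ^ α)⁻¹ = (B * K * (1 + L) / Jb) ^ α := by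
        rw [div_pow, div_eq_mul_inv, mul_pow, mul_pow]
      rw [heq]
      apply pow_le_pow_left₀ (by positivity)
      rw [div_le_div_iff₀ hh0 hJ0]
      have h2 : 0 ≤ B * (1 + L) := by positivity
      nlinarith [mul_le_mul_of_nonneg_left (hjble hE2) h2]
    calc ‖iteratedFDeriv ℝ α (Real.exp ∘ f) ξ‖
        ≤ (α.factorial : ℝ) * Real.exp (f ξ) * (B * (1 + L) / h) ^ α := key
      _ ≤ (α.factorial : ℝ) * Real.exp (f ξ) * (B ^ α * K ^ α * (1 + L) ^ α * (Jb ^ α)⁻¹) := by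
          apply mul_le_mul_of_nonneg_left hDα (by positivity)
      _ = (α.factorial : ℝ) * B ^ α * K ^ α * (1 + L) ^ α * (Jb ^ α)⁻¹ * Real.exp (f ξ) := by
          ring
  · -- ξ outside E : |ξ| > h * R
    have hnot : ξ ∉ {ζ : ℝ | h ≤ |ζ| ∧ |ζ| ≤ h * R} := by
      intro hmem; exact absurd hmem.2 (not_le.mpr hoff2)
    rw [Set.indicator_of_notMem hnot, mul_zero, add_zero, one_pow]
    have hzero : iteratedDeriv α (fun ξ' => Real.exp (s * (M * ω (ξ' / h) * I))) ξ = 0 := by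
      rcases lt_abs.mp hoff2 with hp | hp
      · have hev : (fun ξ' => Real.exp (s * (M * ω (ξ' / h) * I))) =ᶠ[nhds ξ]
            (fun _ => Real.exp (s * (M * ω (ξ / h) * I))) := by
          refine Filter.eventually_of_mem (isOpen_Ioi.mem_nhds hp) (fun ζ hζ => ?_)
          have hζ' : h * R < ζ := hζ
          have hωeq : ω (ζ / h) = ω (ξ / h) := by
            apply hωcp
            · rw [le_div_iff₀ hh0]; nlinarith
            · rw [le_div_iff₀ hh0]; nlinarith
          simp only [hωeq]
        rw [hev.iteratedDeriv_eq α, iterDeriv_const (by omega : α ≠ 0)]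
      · have hp' : ξ < -(h * R) := by
          rcases abs_cases ξ with ⟨he, _⟩ | ⟨he, _⟩ <;> nlinarith [abs_nonneg ξ]
        have hev : (fun ξ' => Real.exp (s * (M * ω (ξ' / h) * I))) =ᶠ[nhds ξ]
            (fun _ => Real.exp (s * (M * ω (ξ / h) * I))) := by
          refine Filter.eventually_of_mem (isOpen_Iio.mem_nhds hp') (fun ζ hζ => ?_)
          have hζ' : ζ < -(h * R) := hζ
          have hωeq : ω (ζ / h) = ω (ξ / h) := by
            apply hωcm
            · rw [div_le_iff₀ hh0]; nlinarith
            · rw [div_le_iff₀ hh0]; nlinarith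
          simp only [hωeq]
        rw [hev.iteratedDeriv_eq α, iterDeriv_const (by omega : α ≠ 0)]
    rw [hzero, abs_zero, hrpow]
    have hpos : 0 < (α.factorial : ℝ) * B ^ α * K ^ α * 1 * (Jb ^ α)⁻¹ *
        Real.exp (s * (M * ω (ξ / h) * I)) := by
      apply mul_pos _ (Real.exp_pos _)
      apply mul_pos _ (inv_pos.mpr (pow_pos hJ0 α))
      apply mul_pos _ (by norm_num : (0:ℝ) < 1)
      exact mul_pos (mul_pos (Nat.cast_pos.mpr α.factorial_pos) (pow_pos hB0 α)) (pow_pos hK0 α)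
    exact le_of_lt hpos
  · -- ξ outside E : |ξ| < h
    have hnot : ξ ∉ {ζ : ℝ | h ≤ |ζ| ∧ |ζ| ≤ h * R} := by
      intro hmem; exact absurd hmem.1 (not_le.mpr hoff1)
    rw [Set.indicator_of_notMem hnot, mul_zero, add_zero, one_pow]
    have hzero : iteratedDeriv α (fun ξ' => Real.exp (s * (M * ω (ξ' / h) * I))) ξ = 0 := by
      have hopen : IsOpen {ζ : ℝ | |ζ| < h} := isOpen_lt continuous_abs continuous_const
      have hev : (fun ξ' => Real.exp (s * (M * ω (ξ' / h) * I))) =ᶠ[nhds ξ]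
          (fun _ => (1:ℝ)) := by
        refine Filter.eventually_of_mem (hopen.mem_nhds hoff1) (fun ζ hζ => ?_)
        have hζ' : |ζ| < h := hζ
        have hωeq : ω (ζ / h) = 0 := by
          apply hω0
          rw [abs_div, abs_of_pos hh0, div_le_one hh0]
          exact le_of_lt hζ'
        simp only [hωeq, mul_zero, zero_mul, mul_one, Real.exp_zero]
      rw [hev.iteratedDeriv_eq α, iterDeriv_const (by omega : α ≠ 0)]
    rw [hzero, abs_zero, hrpow]
    have hpos : 0 < (α.factorial : ℝ) * B ^ α * K ^ α * 1 * (Jb ^ α)⁻¹ *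
        Real.exp (s * (M * ω (ξ / h) * I)) := by
      apply mul_pos _ (Real.exp_pos _)
      apply mul_pos _ (inv_pos.mpr (pow_pos hJ0 α))
      apply mul_pos _ (by norm_num : (0:ℝ) < 1)
      exact mul_pos (mul_pos (Nat.cast_pos.mpr α.factorial_pos) (pow_pos hB0 α)) (pow_pos hK0 α)
    exact le_of_lt hpos
end
end

section
/- Let M > 0, h ≥ 1, R > 1, and let ω ∈ C^∞(ℝ) satisfy |ω(ξ)| ≤ 1 for all ξ, ω(ξ) = 0 for |ξ| ≤ 1, and ω constant on each of {ξ ≥ R} and {ξ ≤ −R}. Define λ(x,ξ) := M·ω(ξ/h)·∫₀ˣ ⟨y⟩^{-1} dy. Then for every integer β ≥ 1 there exists C_β > 0 (depending on β, M but not on h, x, ξ) such that, for either choice of sign, |∂_x^β e^{±λ(x,ξ)}| ≤ C_β·⟨x⟩^{−β}·e^{±λ(x,ξ)} for all x, ξ ∈ ℝ. -/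
open MeasureTheory Real

noncomputable section

lemma jb_pos (x : ℝ) : 0 < jb x := Real.sqrt_pos.2 (by positivity)
lemma abs_le_jb (x : ℝ) : |x| ≤ jb x := by
  rw [← Real.sqrt_sq_eq_abs]; exact Real.sqrt_le_sqrt (by nlinarith)
lemma hasDerivAt_ginv (x : ℝ) :
    HasDerivAt (fun x => (jb x)⁻¹) (-(x * ((jb x)⁻¹) ^ 3)) x := by
  have hjb : HasDerivAt jb (x * (jb x)⁻¹) x := by
    have h : HasDerivAt (fun x : ℝ => 1 + x ^ 2) (2 * x) x := by
      simpa using ((hasDerivAt_pow 2 x).const_add 1)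
    have : HasDerivAt jb _ x := h.sqrt (by positivity)
    convert this using 1
    rw [jb]; field_simp
  have : HasDerivAt (fun x => (jb x)⁻¹) _ x := hjb.fun_inv (ne_of_gt (jb_pos x))
  convert this using 1
  have h0 := (jb_pos x).ne'
  field_simp

structure Mon where
  c : ℝ
  k : ℕ
  i : ℕ
  j : ℕ

def Mon.eval (t : Mon) (a x : ℝ) : ℝ := t.c * a ^ t.k * x ^ t.i * ((jb x)⁻¹) ^ t.j

def msum (l : List Mon) (a x : ℝ) : ℝ := (l.map (fun t => t.eval a x)).sum

def MOk (m : ℤ) (t : Mon) : Prop := t.c = 0 ∨ (t.i : ℤ) - t.j ≤ m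

def Dl : List Mon → List Mon
  | [] => []
  | t :: l => ⟨t.c * t.i, t.k, t.i - 1, t.j⟩ :: ⟨-(t.c * t.j), t.k, t.i + 1, t.j + 2⟩ :: Dl l

def mulAG (l : List Mon) : List Mon := l.map (fun t => ⟨t.c, t.k + 1, t.i, t.j + 1⟩)

lemma msum_nil (a x : ℝ) : msum [] a x = 0 := rfl
lemma msum_cons (t : Mon) (l : List Mon) (a x : ℝ) :
    msum (t :: l) a x = t.eval a x + msum l a x := by simp [msum]
lemma msum_append (l₁ l₂ : List Mon) (a x : ℝ) :
    msum (l₁ ++ l₂) a x = msum l₁ a x + msum l₂ a x := by simp [msum]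

lemma hasDerivAt_eval (t : Mon) (a x : ℝ) :
    HasDerivAt (fun x => t.eval a x)
      ((Mon.mk (t.c * t.i) t.k (t.i - 1) t.j).eval a x +
       (Mon.mk (-(t.c * t.j)) t.k (t.i + 1) (t.j + 2)).eval a x) x := by
  obtain ⟨c, k, i, j⟩ := t
  have h1 : HasDerivAt (fun x : ℝ => c * a ^ k * x ^ i)
      (c * a ^ k * (i * x ^ (i - 1))) x := (hasDerivAt_pow i x).const_mul _
  have h2 : HasDerivAt (fun x : ℝ => ((jb x)⁻¹) ^ j)
      ((j : ℝ) * ((jb x)⁻¹) ^ (j - 1) * (-(x * ((jb x)⁻¹) ^ 3))) x :=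
    (hasDerivAt_ginv x).pow j
  have : HasDerivAt (fun x => (Mon.mk c k i j).eval a x) _ x := h1.fun_mul h2
  convert this using 1
  simp only [Mon.eval]
  cases j with
  | zero => simp; ring
  | succ n => push_cast; ring

lemma hasDerivAt_msum (l : List Mon) (a x : ℝ) :
    HasDerivAt (fun x => msum l a x) (msum (Dl l) a x) x := by
  induction l with
  | nil => simpa [msum, Dl] using hasDerivAt_const x (0:ℝ)
  | cons t l ih =>
      have h := (hasDerivAt_eval t a x).add ih
      have hfun : (fun x => msum (t :: l) a x) = fun x => t.eval a x + msum l a x := by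
        funext y; rw [msum_cons]
      have he : msum (Dl (t :: l)) a x =
          ((Mon.mk (t.c * t.i) t.k (t.i - 1) t.j).eval a x +
           (Mon.mk (-(t.c * t.j)) t.k (t.i + 1) (t.j + 2)).eval a x) + msum (Dl l) a x := by
        simp only [Dl, msum_cons]; ring
      rw [hfun, he]
      exact h

lemma msum_mulAG (l : List Mon) (a x : ℝ) :
    msum (mulAG l) a x = a * (jb x)⁻¹ * msum l a x := by
  induction l with
  | nil => simp [msum, mulAG]
  | cons t l ih =>
      simp only [mulAG, List.map_cons] at *
      rw [msum_cons, msum_cons, ih]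
      simp only [Mon.eval]
      ring

lemma Dl_ok (m : ℤ) (l : List Mon) (hl : ∀ t ∈ l, MOk m t) :
    ∀ t ∈ Dl l, MOk (m - 1) t := by
  induction l with
  | nil => simp [Dl]
  | cons t l ih =>
      intro u hu
      simp only [Dl, List.mem_cons] at hu
      rcases hu with h | h | h
      · rcases hl t (by simp) with hc | hd
        · subst h; left; simp [hc]
        · rcases Nat.eq_zero_or_pos t.i with hi | hi
          · subst h; left; simp [hi]
          · subst h; right; dsimp only
            omega
      · rcases hl t (by simp) with hc | hd
        · subst h; left; simp [hc]
        · subst h; right; dsimp only; push_cast; omega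
      · exact ih (fun u hu => hl u (by simp [hu])) u h

lemma mulAG_ok (m : ℤ) (l : List Mon) (hl : ∀ t ∈ l, MOk m t) :
    ∀ t ∈ mulAG l, MOk (m - 1) t := by
  intro u hu
  simp only [mulAG, List.mem_map] at hu
  obtain ⟨t, ht, rfl⟩ := hu
  rcases hl t ht with hc | hd
  · left; exact hc
  · right; dsimp only; push_cast; omega

lemma eval_bound (M : ℝ) (hM : 0 < M) (m : ℤ) (t : Mon) (ht : MOk m t)
    (a x : ℝ) (ha : |a| ≤ M) : |t.eval a x| ≤ |t.c| * M ^ t.k * jb x ^ (m : ℝ) := by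
  rcases ht with hc | hd
  · have h0 : t.eval a x = 0 := by simp [Mon.eval, hc]
    rw [h0, abs_zero]
    have := jb_pos x
    positivity
  · have hj := jb_pos x
    have h1 : |t.eval a x| = |t.c| * |a| ^ t.k * |x| ^ t.i * ((jb x)⁻¹) ^ t.j := by
      rw [Mon.eval, abs_mul, abs_mul, abs_mul, abs_pow, abs_pow, abs_pow,
        abs_of_pos (inv_pos.2 hj)]
    rw [h1]
    have h2 : |x| ^ t.i * ((jb x)⁻¹) ^ t.j ≤ jb x ^ (m : ℝ) := by
      have hx : |x| ^ t.i * ((jb x)⁻¹) ^ t.j ≤ jb x ^ t.i * ((jb x)⁻¹) ^ t.j :=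
        mul_le_mul_of_nonneg_right
          (pow_le_pow_left₀ (abs_nonneg x) (abs_le_jb x) t.i) (by positivity)
      refine hx.trans ?_
      have hz : jb x ^ t.i * ((jb x)⁻¹) ^ t.j = jb x ^ ((t.i : ℤ) - t.j) := by
        rw [zpow_sub₀ hj.ne', zpow_natCast, zpow_natCast, inv_pow]
        ring
      rw [hz, ← Real.rpow_intCast (jb x) ((t.i : ℤ) - t.j)]
      exact Real.rpow_le_rpow_of_exponent_le (one_le_jb x) (by exact_mod_cast hd)
    have hak : |a| ^ t.k ≤ M ^ t.k := pow_le_pow_left₀ (abs_nonneg a) ha t.k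
    have hnn : (0:ℝ) ≤ |x| ^ t.i * ((jb x)⁻¹) ^ t.j := by positivity
    have hcMnn : (0:ℝ) ≤ |t.c| * M ^ t.k :=
      mul_nonneg (abs_nonneg _) (pow_pos hM _).le
    calc |t.c| * |a| ^ t.k * |x| ^ t.i * ((jb x)⁻¹) ^ t.j
        = (|t.c| * |a| ^ t.k) * (|x| ^ t.i * ((jb x)⁻¹) ^ t.j) := by ring
      _ ≤ (|t.c| * M ^ t.k) * (jb x ^ (m : ℝ)) :=
          mul_le_mul (mul_le_mul_of_nonneg_left hak (abs_nonneg _)) h2 hnn hcMnn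
      _ = |t.c| * M ^ t.k * jb x ^ (m : ℝ) := by ring

lemma msum_bound (M : ℝ) (hM : 0 < M) (m : ℤ) (l : List Mon)
    (hl : ∀ t ∈ l, MOk m t) :
    ∃ C > 0, ∀ a x : ℝ, |a| ≤ M → |msum l a x| ≤ C * jb x ^ (m : ℝ) := by
  induction l with
  | nil =>
      refine ⟨1, one_pos, fun a x _ => ?_⟩
      rw [msum_nil, abs_zero]
      have := jb_pos x
      positivity
  | cons t l ih =>
      obtain ⟨C, hC, hCb⟩ := ih (fun u hu => hl u (by simp [hu]))
      have hpos : (0:ℝ) < C + |t.c| * M ^ t.k + 1 := by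
        have := mul_nonneg (abs_nonneg t.c) (pow_pos hM t.k).le
        linarith
      refine ⟨C + |t.c| * M ^ t.k + 1, hpos, fun a x ha => ?_⟩
      rw [msum_cons]
      calc |t.eval a x + msum l a x| ≤ |t.eval a x| + |msum l a x| := abs_add_le _ _
        _ ≤ |t.c| * M ^ t.k * jb x ^ (m : ℝ) + C * jb x ^ (m : ℝ) :=
            add_le_add (eval_bound M hM m t (hl t (by simp)) a x ha) (hCb a x ha)
        _ ≤ (C + |t.c| * M ^ t.k + 1) * jb x ^ (m : ℝ) := by
            have : (0:ℝ) < jb x ^ (m : ℝ) := by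
              have := jb_pos x; positivity
            nlinarith
end

lemma continuous_ginv : Continuous (fun x : ℝ => (jb x)⁻¹) := by
  have hc : Continuous jb := (continuous_const.add (continuous_pow 2)).sqrt
  exact hc.inv₀ (fun x => (jb_pos x).ne')

lemma hasDerivAt_F (x : ℝ) :
    HasDerivAt (fun u : ℝ => ∫ y in (0:ℝ)..u, (jb y)⁻¹) ((jb x)⁻¹) x :=
  intervalIntegral.integral_hasDerivAt_right
    (continuous_ginv.intervalIntegrable _ _)
    continuous_ginv.aestronglyMeasurable.stronglyMeasurableAtFilter
    continuous_ginv.continuousAt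

lemma hasDerivAt_f (a x : ℝ) :
    HasDerivAt (fun x => Real.exp (a * ∫ y in (0:ℝ)..x, (jb y)⁻¹))
      (a * (jb x)⁻¹ * Real.exp (a * ∫ y in (0:ℝ)..x, (jb y)⁻¹)) x := by
  have := ((hasDerivAt_F x).const_mul a).exp
  convert this using 1
  ring

lemma key (β : ℕ) (hβ : 1 ≤ β) :
    ∃ l : List Mon, (∀ t ∈ l, MOk (-(β:ℤ)) t) ∧ ∀ a x : ℝ,
      iteratedDeriv β (fun x => Real.exp (a * ∫ y in (0:ℝ)..x, (jb y)⁻¹)) x =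
        msum l a x * Real.exp (a * ∫ y in (0:ℝ)..x, (jb y)⁻¹) := by
  induction β with
  | zero => omega
  | succ n ih =>
    rcases Nat.eq_zero_or_pos n with hn | hn
    · subst hn
      refine ⟨[⟨1, 1, 0, 1⟩], ?_, ?_⟩
      · intro t ht
        simp only [List.mem_singleton] at ht
        subst ht; right; dsimp only; omega
      · intro a x
        rw [iteratedDeriv_one, (hasDerivAt_f a x).deriv]
        simp only [msum, Mon.eval, List.map_cons, List.map_nil, List.sum_cons,
          List.sum_nil]
        ring
    · obtain ⟨l, hok, heq⟩ := ih hn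
      refine ⟨Dl l ++ mulAG l, ?_, ?_⟩
      · intro t ht
        have hcast : (-(↑(n + 1) : ℤ)) = -(n : ℤ) - 1 := by push_cast; ring
        rw [hcast]
        rcases List.mem_append.1 ht with hmem | hmem
        · exact Dl_ok _ l hok t hmem
        · exact mulAG_ok _ l hok t hmem
      · intro a x
        rw [iteratedDeriv_succ]
        have hfe : iteratedDeriv n
            (fun x => Real.exp (a * ∫ y in (0:ℝ)..x, (jb y)⁻¹)) =
            fun x => msum l a x * Real.exp (a * ∫ y in (0:ℝ)..x, (jb y)⁻¹) :=
          funext (heq a)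
        rw [hfe, ((hasDerivAt_msum l a x).fun_mul (hasDerivAt_f a x)).deriv,
          msum_append, msum_mulAG]
        ring

/-- estimates for `∂_x^β e^{±λ(x,ξ)}`, `β ≥ 1`, where
`λ(x,ξ) = M·ω(ξ/h)·∫₀ˣ ⟨y⟩⁻¹ dy`; the constant may depend on `β, M` but not on
`h, x, ξ`. -/
theorem stmt6 (M R : ℝ) (hM : 0 < M) (hR : 1 < R)
    (ω : ℝ → ℝ) (hω : ContDiff ℝ (⊤ : ℕ∞) ω) (hωb : ∀ ξ : ℝ, |ω ξ| ≤ 1)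
    (hω0 : ∀ ξ : ℝ, |ξ| ≤ 1 → ω ξ = 0)
    (hωcp : ∀ ξ₁ ξ₂ : ℝ, R ≤ ξ₁ → R ≤ ξ₂ → ω ξ₁ = ω ξ₂)
    (hωcm : ∀ ξ₁ ξ₂ : ℝ, ξ₁ ≤ -R → ξ₂ ≤ -R → ω ξ₁ = ω ξ₂) :
    ∀ β : ℕ, 1 ≤ β → ∃ C > 0, ∀ h : ℝ, 1 ≤ h → ∀ x ξ : ℝ,
      ∀ s : ℝ, s = 1 ∨ s = -1 →
        |iteratedDeriv β
            (fun x' => Real.exp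
              (s * (M * ω (ξ / h) * ∫ y in (0:ℝ)..x', (jb y)⁻¹))) x| ≤
          C * jb x ^ (-(β : ℝ)) *
            Real.exp (s * (M * ω (ξ / h) * ∫ y in (0:ℝ)..x, (jb y)⁻¹)) := by
  intro β hβ
  obtain ⟨l, hok, heq⟩ := key β hβ
  obtain ⟨C, hC, hbd⟩ := msum_bound M hM (-(β:ℤ)) l hok
  refine ⟨C, hC, ?_⟩
  intro h hh x ξ s hs
  set a := s * (M * ω (ξ / h)) with ha
  have habs : |a| ≤ M := by
    have h1 := hωb (ξ / h)
    have hs1 : |s| = 1 := by rcases hs with rfl | rfl <;> simp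
    rw [ha, abs_mul, abs_mul, abs_of_pos hM, hs1]
    nlinarith [abs_nonneg (ω (ξ / h))]
  have hfun : (fun x' => Real.exp
      (s * (M * ω (ξ / h) * ∫ y in (0:ℝ)..x', (jb y)⁻¹))) =
      fun x' => Real.exp (a * ∫ y in (0:ℝ)..x', (jb y)⁻¹) := by
    funext y; congr 1; rw [ha]; ring
  have hexp : s * (M * ω (ξ / h) * ∫ y in (0:ℝ)..x, (jb y)⁻¹) =
      a * ∫ y in (0:ℝ)..x, (jb y)⁻¹ := by rw [ha]; ring
  rw [hfun, hexp, heq a x, abs_mul, abs_of_pos (Real.exp_pos _)]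
  have hcast : ((-(β:ℤ) : ℤ) : ℝ) = -(β : ℝ) := by push_cast; ring
  have hb := hbd a x habs
  rw [hcast] at hb
  exact mul_le_mul_of_nonneg_right hb (Real.exp_pos _).le
end

section
/- Let M > 0, h ≥ 1, R > 1, and let ω ∈ C^∞(ℝ) satisfy |ω(ξ)| ≤ 1 for all ξ, ω(ξ) = 0 for |ξ| ≤ 1, and ω constant on each of {ξ ≥ R} and {ξ ≤ −R}. Define λ(x,ξ) := M·ω(ξ/h)·∫₀ˣ ⟨y⟩^{-1} dy and r(x,ξ) := ∂_ξλ(x,ξ)·∂_xλ(x,ξ). Then for all α, β ∈ ℕ there exists C_{α,β,R} > 0 (depending on α, β, M, R, ω but not on h, x, ξ) such that |∂_ξ^α ∂_x^β r(x,ξ)| ≤ C_{α,β,R}·h^{−1}·⟨ξ⟩_h^{−α}·⟨x⟩^{−β} for all x, ξ ∈ ℝ. -/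
open MeasureTheory Real

noncomputable section

namespace Stmt9Aux

lemma le_inf' {n : ℕ∞} : (n : WithTop ℕ∞) ≤ ((⊤:ℕ∞) : WithTop ℕ∞) := by exact_mod_cast le_top

lemma lt_inf' {n : ℕ} : (n : WithTop ℕ∞) < ((⊤:ℕ∞) : WithTop ℕ∞) := by
  exact_mod_cast lt_top_iff_ne_top.2 (ENat.coe_ne_top n)

/-- iterated derivative of a constant multiple. -/
lemma itd_const_mul {f : ℝ → ℝ} (hf : ContDiff ℝ (⊤:ℕ∞) f) (c : ℝ) (n : ℕ) :
    iteratedDeriv n (fun x => c * f x) = fun x => c * iteratedDeriv n f x := by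
  induction n with
  | zero => simp
  | succ n ih =>
    rw [iteratedDeriv_succ, ih, iteratedDeriv_succ]
    funext x
    exact deriv_const_mul c ((hf.differentiable_iteratedDeriv n lt_inf') x)

lemma itd_zero_fun (n : ℕ) : iteratedDeriv n (fun _ : ℝ => (0:ℝ)) = fun _ => 0 := by
  induction n with
  | zero => simp
  | succ n ih => rw [iteratedDeriv_succ, ih]; funext x; exact deriv_const x 0

lemma eventuallyEq_iteratedDeriv {u v : ℝ → ℝ} {t : ℝ} (h : u =ᶠ[nhds t] v) (k : ℕ) :
    iteratedDeriv k u =ᶠ[nhds t] iteratedDeriv k v := by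
  induction k with
  | zero => simpa using h
  | succ k ih => rw [iteratedDeriv_succ, iteratedDeriv_succ]; exact ih.deriv

/-! ### The weight `w x = 1 + x²` and symbol-type terms -/

def w (x : ℝ) : ℝ := 1 + x ^ 2

lemma w_pos (x : ℝ) : 0 < w x := by unfold w; positivity

lemma one_le_w (x : ℝ) : 1 ≤ w x := by unfold w; nlinarith [sq_nonneg x]

lemma w_contDiff : ContDiff ℝ (⊤:ℕ∞) w := by unfold w; fun_prop

lemma wrpow_contDiff (s : ℝ) : ContDiff ℝ (⊤:ℕ∞) (fun x => w x ^ s) := by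
  rw [contDiff_iff_contDiffAt]
  intro x
  exact (Real.contDiffAt_rpow_const_of_ne (w_pos x).ne').comp x w_contDiff.contDiffAt

lemma sqrtw_inv (x : ℝ) : (Real.sqrt (1 + x ^ 2))⁻¹ = w x ^ (-(1/2) : ℝ) := by
  rw [show (1 + x ^ 2) = w x from rfl, Real.sqrt_eq_rpow, ← Real.rpow_neg (w_pos x).le]

lemma jb_rpow (x : ℝ) (r : ℝ) : jb x ^ r = w x ^ (r / 2) := by
  rw [jb, show (1 + x ^ 2) = w x from rfl, Real.sqrt_eq_rpow, ← Real.rpow_mul (w_pos x).le]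
  congr 1
  ring

/-- basic term `c·xᵃ·w^s`. -/
def T (c : ℝ) (a : ℕ) (s : ℝ) : ℝ → ℝ := fun x => c * x ^ a * w x ^ s

/-- term with an `arsinh` factor. -/
def TA (c : ℝ) (a : ℕ) (s : ℝ) : ℝ → ℝ := fun x => c * x ^ a * w x ^ s * Real.arsinh x

lemma hasDerivAt_w (x : ℝ) : HasDerivAt w (2 * x) x := by
  have := ((hasDerivAt_pow 2 x).const_add 1)
  show HasDerivAt (fun x => 1 + x ^ 2) (2 * x) x
  simpa [w] using this

lemma hasDerivAt_wrpow (s : ℝ) (x : ℝ) :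
    HasDerivAt (fun x => w x ^ s) (2 * s * x * w x ^ (s - 1)) x := by
  have := (hasDerivAt_w x).rpow_const (p := s) (Or.inl (w_pos x).ne')
  convert this using 1
  ring

lemma T_contDiff (c : ℝ) (a : ℕ) (s : ℝ) : ContDiff ℝ (⊤:ℕ∞) (T c a s) :=
  ((contDiff_const.mul (contDiff_id.pow a)).mul (wrpow_contDiff s))

lemma TA_contDiff (c : ℝ) (a : ℕ) (s : ℝ) : ContDiff ℝ (⊤:ℕ∞) (TA c a s) :=
  (T_contDiff c a s).mul Real.contDiff_arsinh

lemma hasDerivAt_T (c : ℝ) (a : ℕ) (s : ℝ) (x : ℝ) :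
    HasDerivAt (T c a s)
      (T (c * a) (a - 1) s x + T (c * (2 * s)) (a + 1) (s - 1) x) x := by
  have h1 : HasDerivAt (fun x : ℝ => c * x ^ a) (c * (a * x ^ (a - 1))) x :=
    (hasDerivAt_pow a x).const_mul c
  have h2 := h1.mul (hasDerivAt_wrpow s x)
  refine h2.congr_deriv ?_
  simp only [T]
  ring

lemma hasDerivAt_TA (c : ℝ) (a : ℕ) (s : ℝ) (x : ℝ) :
    HasDerivAt (TA c a s)
      (TA (c * a) (a - 1) s x + TA (c * (2 * s)) (a + 1) (s - 1) x
        + T c a (s - 1/2) x) x := by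
  have h2 := (hasDerivAt_T c a s x).mul (Real.hasDerivAt_arsinh x)
  refine h2.congr_deriv ?_
  simp only [T, TA, sqrtw_inv x]
  rw [show s - 1/2 = s + (-(1/2)) by ring, Real.rpow_add (w_pos x)]
  ring

/-- Structured representation: sums of terms `c·xᵃ·w^s(·arsinh)` of order `a+2s ≤ m`. -/
inductive Rep : ℝ → (ℝ → ℝ) → Prop
  | pure (m c : ℝ) (a : ℕ) (s : ℝ) (h : (a:ℝ) + 2*s ≤ m) : Rep m (T c a s)
  | pureA (m c : ℝ) (a : ℕ) (s : ℝ) (h : (a:ℝ) + 2*s ≤ m) : Rep m (TA c a s)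
  | zero (m : ℝ) : Rep m (fun _ => 0)
  | add {m : ℝ} {u v : ℝ → ℝ} : Rep m u → Rep m v → Rep m (fun x => u x + v x)

lemma Rep.contDiff {m : ℝ} {u : ℝ → ℝ} (h : Rep m u) : ContDiff ℝ (⊤:ℕ∞) u := by
  induction h with
  | pure c a s h => exact T_contDiff c a s
  | pureA c a s h => exact TA_contDiff c a s
  | zero => exact contDiff_const
  | add hu hv ihu ihv => exact ihu.add ihv

lemma Rep.deriv {m : ℝ} {u : ℝ → ℝ} (h : Rep m u) : Rep (m - 1) (_root_.deriv u) := by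
  induction h with
  | pure c a s h =>
    have hd : _root_.deriv (T c a s)
        = fun x => T (c * a) (a - 1) s x + T (c * (2 * s)) (a + 1) (s - 1) x :=
      funext fun x => (hasDerivAt_T c a s x).deriv
    rw [hd]
    rcases Nat.eq_zero_or_pos a with ha | ha
    · subst ha
      have he : (fun x => T (c * (0:ℕ)) (0 - 1) s x + T (c * (2 * s)) (0 + 1) (s - 1) x)
          = fun x => (fun _ : ℝ => (0:ℝ)) x + T (c * (2 * s)) (0 + 1) (s - 1) x := by
        funext x; simp [T]
      rw [he]
      refine Rep.add (Rep.zero _) (Rep.pure _ _ _ _ ?_)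
      push_cast
      simp only [Nat.cast_zero] at h
      linarith
    · refine Rep.add (Rep.pure _ _ _ _ ?_) (Rep.pure _ _ _ _ ?_)
      · rw [Nat.cast_sub ha]; push_cast; linarith
      · push_cast; linarith
  | pureA c a s h =>
    have hd : _root_.deriv (TA c a s)
        = fun x => TA (c * a) (a - 1) s x + TA (c * (2 * s)) (a + 1) (s - 1) x
            + T c a (s - 1/2) x :=
      funext fun x => (hasDerivAt_TA c a s x).deriv
    rw [hd]
    rcases Nat.eq_zero_or_pos a with ha | ha
    · subst ha
      have he : (fun x => TA (c * (0:ℕ)) (0 - 1) s x + TA (c * (2 * s)) (0 + 1) (s - 1) x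
            + T c 0 (s - 1/2) x)
          = fun x => ((fun _ : ℝ => (0:ℝ)) x + TA (c * (2 * s)) (0 + 1) (s - 1) x)
            + T c 0 (s - 1/2) x := by
        funext x; simp [TA]
      rw [he]
      simp only [Nat.cast_zero] at h
      refine Rep.add (Rep.add (Rep.zero _) (Rep.pureA _ _ _ _ ?_)) (Rep.pure _ _ _ _ ?_)
      · push_cast; linarith
      · push_cast; linarith
    · refine Rep.add (Rep.add (Rep.pureA _ _ _ _ ?_) (Rep.pureA _ _ _ _ ?_))
        (Rep.pure _ _ _ _ ?_)
      · rw [Nat.cast_sub ha]; push_cast; linarith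
      · push_cast; linarith
      · push_cast; linarith
  | zero =>
    have hd : _root_.deriv (fun _ : ℝ => (0:ℝ)) = fun _ : ℝ => (0:ℝ) :=
      funext fun x => deriv_const x 0
    rw [hd]; exact Rep.zero _
  | add hu hv ihu ihv =>
    rename_i u v
    have hd : _root_.deriv (fun x => u x + v x) = fun x => _root_.deriv u x + _root_.deriv v x := by
      funext x
      exact deriv_add ((hu.contDiff.differentiable (by simp)) x)
        ((hv.contDiff.differentiable (by simp)) x)
    rw [hd]; exact Rep.add ihu ihv

lemma abs_x_pow_le (x : ℝ) (a : ℕ) : |x| ^ a ≤ w x ^ ((a : ℝ) / 2) := by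
  have h1 : |x| ≤ w x ^ ((1:ℝ)/2) := by
    rw [← Real.sqrt_eq_rpow]
    have : |x| = Real.sqrt (x ^ 2) := (Real.sqrt_sq_eq_abs x).symm
    rw [this]
    exact Real.sqrt_le_sqrt (by unfold w; linarith)
  calc |x| ^ a ≤ (w x ^ ((1:ℝ)/2)) ^ a := pow_le_pow_left₀ (abs_nonneg x) h1 a
    _ = w x ^ ((a:ℝ)/2) := by
        rw [← Real.rpow_natCast (w x ^ ((1:ℝ)/2)) a, ← Real.rpow_mul (w_pos x).le]
        ring_nf

lemma abs_arsinh_le (x : ℝ) : |Real.arsinh x| ≤ 3 * w x ^ ((1:ℝ)/4) := by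
  have key : ∀ y : ℝ, 0 ≤ y → Real.arsinh y ≤ 3 * w y ^ ((1:ℝ)/4) := by
    intro y hy
    have hw4 : (1:ℝ) ≤ w y ^ ((1:ℝ)/4) :=
      Real.one_le_rpow (one_le_w y) (by norm_num)
    have hw4pos : (0:ℝ) < w y ^ ((1:ℝ)/4) := lt_of_lt_of_le one_pos hw4
    have hsq : Real.sqrt (1 + y ^ 2) = w y ^ ((1:ℝ)/2) := by
      rw [show (1 + y ^ 2) = w y from rfl, Real.sqrt_eq_rpow]
    have hyle : y ≤ w y ^ ((1:ℝ)/2) := by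
      calc y = |y| := (abs_of_nonneg hy).symm
        _ = |y| ^ 1 := (pow_one _).symm
        _ ≤ w y ^ ((1:ℝ)/2) := by simpa using abs_x_pow_le y 1
    have harg : y + Real.sqrt (1 + y ^ 2) ≤ 2 * w y ^ ((1:ℝ)/2) := by
      rw [hsq]; linarith
    have hargpos : (0:ℝ) < y + Real.sqrt (1 + y ^ 2) := by
      have : (0:ℝ) < Real.sqrt (1 + y ^ 2) := Real.sqrt_pos.2 (by positivity)
      linarith
    have hlog : Real.arsinh y ≤ Real.log (2 * w y ^ ((1:ℝ)/2)) := by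
      rw [Real.arsinh]
      exact Real.log_le_log hargpos harg
    have hsplit : Real.log (2 * w y ^ ((1:ℝ)/2)) = Real.log 2 + Real.log (w y ^ ((1:ℝ)/2)) :=
      Real.log_mul (by norm_num) (Real.rpow_pos_of_pos (w_pos y) _).ne'
    have hhalf : Real.log (w y ^ ((1:ℝ)/2)) = 2 * Real.log (w y ^ ((1:ℝ)/4)) := by
      rw [Real.log_rpow (w_pos y), Real.log_rpow (w_pos y)]; ring
    have hlog4 : Real.log (w y ^ ((1:ℝ)/4)) ≤ w y ^ ((1:ℝ)/4) := by
      have := Real.log_le_sub_one_of_pos hw4pos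
      linarith
    have hlog2 : Real.log 2 ≤ 1 := by
      have := Real.log_le_sub_one_of_pos (by norm_num : (0:ℝ) < 2)
      linarith
    linarith
  rcases le_total 0 x with hx | hx
  · rw [abs_of_nonneg (Real.arsinh_nonneg_iff.2 hx)]
    exact key x hx
  · rw [abs_of_nonpos (Real.arsinh_nonpos_iff.2 hx)]
    have := key (-x) (by linarith)
    rw [Real.arsinh_neg] at this
    have hww : w (-x) = w x := by unfold w; ring
    rw [hww] at this
    linarith

lemma Rep.bound {m : ℝ} {u : ℝ → ℝ} (h : Rep m u) :
    ∃ C, 0 < C ∧ ∀ x, |u x| ≤ C * w x ^ (m/2 + 1/4) := by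
  induction h with
  | pure c a s h =>
    refine ⟨|c| + 1, by positivity, fun x => ?_⟩
    have h1 : |T c a s x| ≤ |c| * w x ^ ((a:ℝ)/2 + s) := by
      rw [T, abs_mul, abs_mul, abs_rpow_of_nonneg (w_pos x).le, abs_of_pos (w_pos x),
        abs_pow, Real.rpow_add (w_pos x)]
      have := abs_x_pow_le x a
      have hws : (0:ℝ) < w x ^ s := Real.rpow_pos_of_pos (w_pos x) s
      calc |c| * |x| ^ a * w x ^ s ≤ |c| * w x ^ ((a:ℝ)/2) * w x ^ s := by
            apply mul_le_mul_of_nonneg_right _ hws.le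
            exact mul_le_mul_of_nonneg_left this (abs_nonneg c)
        _ = |c| * (w x ^ ((a:ℝ)/2) * w x ^ s) := by ring
    have h2 : w x ^ ((a:ℝ)/2 + s) ≤ w x ^ (m/2 + 1/4) :=
      Real.rpow_le_rpow_of_exponent_le (one_le_w x) (by linarith)
    have hw : (0:ℝ) < w x ^ (m/2 + 1/4) := Real.rpow_pos_of_pos (w_pos x) _
    nlinarith [abs_nonneg c, Real.rpow_pos_of_pos (w_pos x) ((a:ℝ)/2 + s)]
  | pureA c a s h =>
    refine ⟨3 * (|c| + 1), by positivity, fun x => ?_⟩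
    have h1 : |T c a s x| ≤ |c| * w x ^ ((a:ℝ)/2 + s) := by
      rw [T, abs_mul, abs_mul, abs_rpow_of_nonneg (w_pos x).le, abs_of_pos (w_pos x),
        abs_pow, Real.rpow_add (w_pos x)]
      have := abs_x_pow_le x a
      have hws : (0:ℝ) < w x ^ s := Real.rpow_pos_of_pos (w_pos x) s
      calc |c| * |x| ^ a * w x ^ s ≤ |c| * w x ^ ((a:ℝ)/2) * w x ^ s := by
            apply mul_le_mul_of_nonneg_right _ hws.le
            exact mul_le_mul_of_nonneg_left this (abs_nonneg c)
        _ = |c| * (w x ^ ((a:ℝ)/2) * w x ^ s) := by ring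
    have h2 := abs_arsinh_le x
    have hTA : |TA c a s x| ≤ (|c| * w x ^ ((a:ℝ)/2 + s)) * (3 * w x ^ ((1:ℝ)/4)) := by
      rw [TA, abs_mul]
      exact mul_le_mul h1 h2 (abs_nonneg _)
        (mul_nonneg (abs_nonneg c) (Real.rpow_pos_of_pos (w_pos x) _).le)
    have h3 : w x ^ ((a:ℝ)/2 + s) * w x ^ ((1:ℝ)/4) = w x ^ ((a:ℝ)/2 + s + 1/4) := by
      rw [← Real.rpow_add (w_pos x)]
    have h4 : w x ^ ((a:ℝ)/2 + s + 1/4) ≤ w x ^ (m/2 + 1/4) :=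
      Real.rpow_le_rpow_of_exponent_le (one_le_w x) (by linarith)
    calc |TA c a s x| ≤ (|c| * w x ^ ((a:ℝ)/2 + s)) * (3 * w x ^ ((1:ℝ)/4)) := hTA
      _ = 3 * |c| * w x ^ ((a:ℝ)/2 + s + 1/4) := by rw [← h3]; ring
      _ ≤ 3 * (|c| + 1) * w x ^ (m/2 + 1/4) := by
          have hw : (0:ℝ) < w x ^ ((a:ℝ)/2 + s + 1/4) := Real.rpow_pos_of_pos (w_pos x) _
          nlinarith [abs_nonneg c, Real.rpow_pos_of_pos (w_pos x) (m/2 + 1/4)]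
  | zero =>
    refine ⟨1, one_pos, fun x => ?_⟩
    have : (0:ℝ) < w x ^ (m/2 + 1/4) := Real.rpow_pos_of_pos (w_pos x) _
    simpa using this.le
  | add hu hv ihu ihv =>
    obtain ⟨C1, hC1, hb1⟩ := ihu
    obtain ⟨C2, hC2, hb2⟩ := ihv
    refine ⟨C1 + C2, by positivity, fun x => ?_⟩
    calc |_| ≤ _ + _ := abs_add_le _ _
      _ ≤ C1 * w x ^ (m/2 + 1/4) + C2 * w x ^ (m/2 + 1/4) := add_le_add (hb1 x) (hb2 x)
      _ = (C1 + C2) * w x ^ (m/2 + 1/4) := by ring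

/-! ### The function `f x = arsinh x / ⟨x⟩` -/

def ffun : ℝ → ℝ := fun x => Real.arsinh x * (jb x)⁻¹

lemma ffun_eq : ffun = TA 1 0 (-(1/2)) := by
  funext x
  simp only [ffun, TA, jb, pow_zero, mul_one, one_mul, sqrtw_inv x]
  ring

lemma ffun_contDiff : ContDiff ℝ (⊤:ℕ∞) ffun := by
  rw [ffun_eq]; exact TA_contDiff 1 0 (-(1/2))

lemma ffun_rep : Rep (-1) ffun := by
  rw [ffun_eq]
  exact Rep.pureA (-1) 1 0 (-(1/2)) (by push_cast; norm_num)

lemma rep_iteratedDeriv {m : ℝ} {u : ℝ → ℝ} (hu : Rep m u) (n : ℕ) :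
    Rep (m - n) (iteratedDeriv n u) := by
  induction n with
  | zero => simpa using hu
  | succ n ih =>
    rw [iteratedDeriv_succ]
    have := ih.deriv
    have he : m - (n:ℝ) - 1 = m - ((n+1 : ℕ) : ℝ) := by push_cast; ring
    rwa [he] at this

lemma ffun_bound (n : ℕ) : ∃ C, 0 < C ∧ ∀ x, |iteratedDeriv n ffun x| ≤ C * jb x ^ (-(n:ℝ)) := by
  obtain ⟨C, hC, hb⟩ := (rep_iteratedDeriv ffun_rep n).bound
  refine ⟨C, hC, fun x => ?_⟩
  have h1 : w x ^ ((-1 - (n:ℝ))/2 + 1/4) ≤ w x ^ (-(n:ℝ)/2) :=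
    Real.rpow_le_rpow_of_exponent_le (one_le_w x) (by linarith)
  have h2 : jb x ^ (-(n:ℝ)) = w x ^ (-(n:ℝ)/2) := jb_rpow x _
  rw [h2]
  calc |iteratedDeriv n ffun x| ≤ C * w x ^ ((-1 - (n:ℝ))/2 + 1/4) := hb x
    _ ≤ C * w x ^ (-(n:ℝ)/2) := mul_le_mul_of_nonneg_left h1 hC.le

/-! ### The integral is `arsinh` -/

lemma integral_jb (z : ℝ) : (∫ y in (0:ℝ)..z, (jb y)⁻¹) = Real.arsinh z := by
  have hcont : Continuous (fun y : ℝ => (jb y)⁻¹) := by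
    have hne : ∀ y : ℝ, jb y ≠ 0 := fun y => (Real.sqrt_pos.2 (by positivity)).ne'
    unfold jb
    have : Continuous fun y : ℝ => Real.sqrt (1 + y ^ 2) := by fun_prop
    exact this.inv₀ (fun y => hne y)
  have hder : ∀ t ∈ Set.uIcc (0:ℝ) z, HasDerivAt Real.arsinh ((jb t)⁻¹) t := by
    intro t _
    simpa [jb] using Real.hasDerivAt_arsinh t
  have := intervalIntegral.integral_eq_sub_of_hasDerivAt hder (hcont.intervalIntegrable 0 z)
  rw [this, Real.arsinh_zero, sub_zero]

end Stmt9Aux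

open Stmt9Aux

/-- for `λ(x,ξ) = M·ω(ξ/h)·∫₀ˣ ⟨y⟩⁻¹ dy` and
`r(x,ξ) = ∂_ξλ(x,ξ)·∂_xλ(x,ξ)`, the estimates
`|∂_ξ^α ∂_x^β r(x,ξ)| ≤ C·h⁻¹·⟨ξ⟩ₕ^{-α}·⟨x⟩^{-β}` hold with a constant which may
depend on `α, β, M, R, ω` but not on `h, x, ξ`. -/
theorem stmt9 (M R : ℝ) (hM : 0 < M) (hR : 1 < R)
    (ω : ℝ → ℝ) (hω : ContDiff ℝ (⊤ : ℕ∞) ω) (hωb : ∀ ξ : ℝ, |ω ξ| ≤ 1)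
    (hω0 : ∀ ξ : ℝ, |ξ| ≤ 1 → ω ξ = 0)
    (hωcp : ∀ ξ₁ ξ₂ : ℝ, R ≤ ξ₁ → R ≤ ξ₂ → ω ξ₁ = ω ξ₂)
    (hωcm : ∀ ξ₁ ξ₂ : ℝ, ξ₁ ≤ -R → ξ₂ ≤ -R → ω ξ₁ = ω ξ₂) :
    ∀ α β : ℕ, ∃ C > 0, ∀ h : ℝ, 1 ≤ h → ∀ x ξ : ℝ,
      |iteratedDeriv α
          (fun ξ' => iteratedDeriv β
            (fun x' =>
              deriv (fun ζ => M * ω (ζ / h) * ∫ y in (0:ℝ)..x', (jb y)⁻¹) ξ' *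
                deriv (fun z => M * ω (ξ' / h) * ∫ y in (0:ℝ)..z, (jb y)⁻¹) x') x) ξ| ≤
        C * h⁻¹ * jbh h ξ ^ (-(α : ℝ)) * jb x ^ (-(β : ℝ)) := by
  intro α β
  have hωd : Differentiable ℝ ω := hω.differentiable (by simp)
  set g : ℝ → ℝ := fun t => deriv ω t * ω t with hgdef
  have hg : ContDiff ℝ (⊤:ℕ∞) g := ((contDiff_infty_iff_deriv.1 hω).2).mul hω
  -- vanishing of iterated derivatives of g outside [-R, R]
  have hvan : ∀ t : ℝ, R < |t| → iteratedDeriv α g t = 0 := by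
    intro t ht
    have hg0 : g =ᶠ[nhds t] (fun _ => 0) := by
      rcases lt_abs.1 ht with h1 | h1
      · -- t > R
        have hmem : Set.Ioi R ∈ nhds t := isOpen_Ioi.mem_nhds h1
        have hev : ω =ᶠ[nhds t] (fun _ => ω R) :=
          Filter.eventually_of_mem hmem (fun s hs => hωcp s R (le_of_lt hs) le_rfl)
        have hder : deriv ω =ᶠ[nhds t] deriv (fun _ => ω R) := hev.deriv
        filter_upwards [hder, hev] with s h1s h2s
        rw [hgdef]
        simp only [h1s, h2s, deriv_const]
        ring
      · -- -R > t, i.e. t < -R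
        have h1' : t < -R := by linarith
        have hmem : Set.Iio (-R) ∈ nhds t := isOpen_Iio.mem_nhds h1'
        have hev : ω =ᶠ[nhds t] (fun _ => ω (-R)) :=
          Filter.eventually_of_mem hmem (fun s hs => hωcm s (-R) (le_of_lt hs) le_rfl)
        have hder : deriv ω =ᶠ[nhds t] deriv (fun _ => ω (-R)) := hev.deriv
        filter_upwards [hder, hev] with s h1s h2s
        rw [hgdef]
        simp only [h1s, h2s, deriv_const]
        ring
    have := (eventuallyEq_iteratedDeriv hg0 α).eq_of_nhds
    rw [this, itd_zero_fun]
  -- uniform bound on iterated derivative of g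
  obtain ⟨Cg, hCg, hCgb⟩ : ∃ Cg, 0 < Cg ∧ ∀ t, |iteratedDeriv α g t| ≤ Cg := by
    obtain ⟨C0, hC0⟩ := (isCompact_Icc (a := -R) (b := R)).exists_bound_of_continuousOn
      ((hg.continuous_iteratedDeriv α le_inf').continuousOn)
    refine ⟨max C0 1, lt_of_lt_of_le one_pos (le_max_right _ _), fun t => ?_⟩
    by_cases ht : |t| ≤ R
    · have := hC0 t (by rw [Set.mem_Icc]; constructor <;> [linarith [abs_le.1 ht |>.1]; exact (abs_le.1 ht).2])
      calc |iteratedDeriv α g t| ≤ C0 := by simpa using this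
        _ ≤ max C0 1 := le_max_left _ _
    · rw [hvan t (not_le.1 ht)]
      simp only [abs_zero]
      exact le_trans zero_le_one (le_max_right _ _)
  obtain ⟨Cf, hCf, hCfb⟩ := ffun_bound β
  set s₀ : ℝ := Real.sqrt (1 + R ^ 2) with hs₀def
  have hs₀ : 1 ≤ s₀ := by
    have := Real.sqrt_le_sqrt (show (1:ℝ) ≤ 1 + R ^ 2 by nlinarith)
    simpa [hs₀def] using this
  have hs₀pos : 0 < s₀ := lt_of_lt_of_le one_pos hs₀
  refine ⟨M ^ 2 * Cf * Cg * s₀ ^ α, by positivity, ?_⟩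
  intro h hh x ξ
  have h0 : (0 : ℝ) < h := lt_of_lt_of_le one_pos hh
  have hjbhpos : 0 < jbh h ξ := Real.sqrt_pos.2 (by positivity)
  have hjbpos : ∀ y : ℝ, 0 < jb y := fun y => Real.sqrt_pos.2 (by positivity)
  have hXpos : 0 < jb x ^ (-(β:ℝ)) := Real.rpow_pos_of_pos (hjbpos x) _
  have hYpos : 0 < jbh h ξ ^ (-(α:ℝ)) := Real.rpow_pos_of_pos hjbhpos _
  -- Step 1: rewrite inner function
  have hstep1 : ∀ ξ' : ℝ, (fun x' =>
        deriv (fun ζ => M * ω (ζ / h) * ∫ y in (0:ℝ)..x', (jb y)⁻¹) ξ' *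
          deriv (fun z => M * ω (ξ' / h) * ∫ y in (0:ℝ)..z, (jb y)⁻¹) x')
      = fun x' => (M ^ 2 * h⁻¹ * g (ξ'/h)) * ffun x' := by
    intro ξ'
    funext x'
    have hd1 : deriv (fun ζ => M * ω (ζ / h) * ∫ y in (0:ℝ)..x', (jb y)⁻¹) ξ'
        = M * (deriv ω (ξ'/h) * h⁻¹) * Real.arsinh x' := by
      rw [integral_jb x']
      have hin : HasDerivAt (fun ζ : ℝ => ζ / h) (1/h) ξ' := by
        simpa using (hasDerivAt_id ξ').div_const h
      have hcomp : HasDerivAt (fun ζ : ℝ => ω (ζ / h)) (deriv ω (ξ'/h) * (1/h)) ξ' :=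
        HasDerivAt.comp ξ' ((hωd (ξ'/h)).hasDerivAt) hin
      have hfin := (hcomp.const_mul M).mul_const (Real.arsinh x')
      have : HasDerivAt (fun ζ : ℝ => M * ω (ζ / h) * Real.arsinh x')
          (M * (deriv ω (ξ'/h) * h⁻¹) * Real.arsinh x') ξ' := by
        refine hfin.congr_deriv ?_
        rw [one_div]
      exact this.deriv
    have hd2 : deriv (fun z => M * ω (ξ' / h) * ∫ y in (0:ℝ)..z, (jb y)⁻¹) x'
        = (M * ω (ξ'/h)) * (jb x')⁻¹ := by
      have he : (fun z => M * ω (ξ' / h) * ∫ y in (0:ℝ)..z, (jb y)⁻¹)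
          = fun z => (M * ω (ξ'/h)) * Real.arsinh z := by
        funext z; rw [integral_jb z]
      rw [he]
      have := (Real.hasDerivAt_arsinh x').const_mul (M * ω (ξ'/h))
      rw [this.deriv, jb]
    rw [hd1, hd2]
    simp only [ffun, hgdef]
    ring
  -- Step 2: pull constants out of the β-iterated derivative
  have hstep2 : (fun ξ' => iteratedDeriv β
        (fun x' =>
          deriv (fun ζ => M * ω (ζ / h) * ∫ y in (0:ℝ)..x', (jb y)⁻¹) ξ' *
            deriv (fun z => M * ω (ξ' / h) * ∫ y in (0:ℝ)..z, (jb y)⁻¹) x') x)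
      = fun ξ' => (M ^ 2 * h⁻¹ * iteratedDeriv β ffun x) * g (h⁻¹ * ξ') := by
    funext ξ'
    rw [hstep1 ξ', itd_const_mul ffun_contDiff (M ^ 2 * h⁻¹ * g (ξ'/h)) β]
    rw [div_eq_inv_mul]
    ring
  rw [hstep2]
  set K : ℝ := M ^ 2 * h⁻¹ * iteratedDeriv β ffun x with hKdef
  -- Step 3: compute the α-iterated derivative
  have hgscale : ContDiff ℝ (⊤:ℕ∞) (fun ξ' : ℝ => g (h⁻¹ * ξ')) :=
    hg.comp (contDiff_const.mul contDiff_id)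
  have hstep3 : iteratedDeriv α (fun ξ' => K * g (h⁻¹ * ξ')) ξ
      = K * ((h⁻¹) ^ α * iteratedDeriv α g (h⁻¹ * ξ)) := by
    rw [itd_const_mul hgscale K, iteratedDeriv_comp_const_mul (hg.of_le le_inf') h⁻¹]
  rw [hstep3]
  -- Step 4: estimate
  rcases eq_or_ne (iteratedDeriv α g (h⁻¹ * ξ)) 0 with hz | hz
  · rw [hz]
    simp only [mul_zero, abs_zero]
    positivity
  · have htle : |h⁻¹ * ξ| ≤ R := by
      by_contra hcon
      exact hz (hvan _ (not_le.1 hcon))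
    -- |ξ| ≤ h * R, hence jbh h ξ ≤ h * s₀
    have hξle : |ξ| ≤ h * R := by
      have := htle
      rw [abs_mul, abs_inv, abs_of_pos h0] at this
      calc |ξ| = h * (h⁻¹ * |ξ|) := by field_simp
        _ ≤ h * R := mul_le_mul_of_nonneg_left this h0.le
    have hjbhle : jbh h ξ ≤ h * s₀ := by
      rw [jbh, hs₀def]
      have h1 : h ^ 2 + ξ ^ 2 ≤ h ^ 2 * (1 + R ^ 2) := by
        have : ξ ^ 2 ≤ (h * R) ^ 2 := by
          rw [← sq_abs ξ]
          exact pow_le_pow_left₀ (abs_nonneg ξ) hξle 2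
        nlinarith
      calc Real.sqrt (h ^ 2 + ξ ^ 2) ≤ Real.sqrt (h ^ 2 * (1 + R ^ 2)) := Real.sqrt_le_sqrt h1
        _ = h * Real.sqrt (1 + R ^ 2) := by
            rw [Real.sqrt_mul (sq_nonneg h), Real.sqrt_sq h0.le]
    -- (h⁻¹)^α ≤ s₀^α * jbh^(-α)
    have hstep : (h⁻¹) ^ α ≤ s₀ ^ α * jbh h ξ ^ (-(α:ℝ)) := by
      have h1 : (h * s₀) ^ (-(α:ℝ)) ≤ jbh h ξ ^ (-(α:ℝ)) :=
        Real.rpow_le_rpow_of_nonpos hjbhpos hjbhle (neg_nonpos.2 (Nat.cast_nonneg α))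
      have h2 : (h * s₀) ^ (-(α:ℝ)) = (h⁻¹) ^ α * (s₀ ^ α)⁻¹ := by
        rw [Real.mul_rpow h0.le hs₀pos.le, Real.rpow_neg h0.le, Real.rpow_neg hs₀pos.le,
          Real.rpow_natCast, Real.rpow_natCast, inv_pow]
      rw [h2] at h1
      have hs₀apos : (0:ℝ) < s₀ ^ α := pow_pos hs₀pos α
      calc (h⁻¹) ^ α = s₀ ^ α * ((h⁻¹) ^ α * (s₀ ^ α)⁻¹) := by field_simp
        _ ≤ s₀ ^ α * jbh h ξ ^ (-(α:ℝ)) := mul_le_mul_of_nonneg_left h1 hs₀apos.le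
    have hFb := hCfb x
    have hGb := hCgb (h⁻¹ * ξ)
    have hKabs : |K| = M ^ 2 * h⁻¹ * |iteratedDeriv β ffun x| := by
      rw [hKdef, abs_mul, abs_mul]
      rw [abs_of_pos (by positivity : (0:ℝ) < M ^ 2), abs_of_pos (by positivity : (0:ℝ) < h⁻¹)]
    calc |K * ((h⁻¹) ^ α * iteratedDeriv α g (h⁻¹ * ξ))|
        = |K| * ((h⁻¹) ^ α * |iteratedDeriv α g (h⁻¹ * ξ)|) := by
          rw [abs_mul K, abs_mul (h⁻¹ ^ α) (iteratedDeriv α g (h⁻¹ * ξ)),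
            abs_of_nonneg (pow_nonneg (inv_nonneg.2 h0.le) α)]
      _ = M ^ 2 * h⁻¹ * |iteratedDeriv β ffun x| * (h⁻¹) ^ α * |iteratedDeriv α g (h⁻¹ * ξ)| := by
          rw [hKabs]; ring
      _ ≤ M ^ 2 * h⁻¹ * (Cf * jb x ^ (-(β:ℝ))) * (s₀ ^ α * jbh h ξ ^ (-(α:ℝ))) * Cg := by
          gcongr
      _ = M ^ 2 * Cf * Cg * s₀ ^ α * h⁻¹ * jbh h ξ ^ (-(α:ℝ)) * jb x ^ (-(β:ℝ)) := by ring
end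
end

section
/- Let p ≥ 2 be an integer, T > 0, h ≥ 1, R > 1, C_p > 0, C > 0. Let a_p : [0,T] × ℝ → ℝ be such that ξ ↦ a_p(t,ξ) is differentiable and |∂_ξ a_p(t,ξ)| ≥ C_p·|ξ|^{p−1} for all t ∈ [0,T] and |ξ| ≥ R. Let ω : ℝ → ℝ satisfy ω(ξ) = sgn(∂_ξ a_p(t,ξ)) for all |ξ| ≥ R and all t ∈ [0,T]. Let b : [0,T] × ℝ × ℝ → ℂ satisfy |Im b(t,x,ξ)| ≤ C·⟨ξ⟩_h^{p−1}·⟨x⟩^{−1} for all t, x, ξ. If M ≥ 2^{(p−1)/2}·C/C_p, then for all t ∈ [0,T], x ∈ ℝ, and ξ with |ξ| ≥ hR, one has −Im b(t,x,ξ) + M·∂_ξ a_p(t,ξ)·ω(ξ/h)·⟨x⟩^{−1} ≥ (2^{−(p−1)/2}·C_p·M − C)·⟨ξ⟩_h^{p−1}·⟨x⟩^{−1} ≥ 0. -/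
open MeasureTheory Real

noncomputable section

/-- positivity of the term of order `p-1` after the first conjugation.
If `|∂_ξ a_p(t,ξ)| ≥ C_p|ξ|^{p-1}` for `|ξ| ≥ R`, `ω(ξ) = sgn(∂_ξ a_p(t,ξ))` for
`|ξ| ≥ R`, `|Im b(t,x,ξ)| ≤ C⟨ξ⟩ₕ^{p-1}⟨x⟩⁻¹` and `M ≥ 2^{(p-1)/2}·C/C_p`, then for
`|ξ| ≥ hR` one has
`-Im b + M·∂_ξa_p·ω(ξ/h)·⟨x⟩⁻¹ ≥ (2^{-(p-1)/2}C_pM - C)·⟨ξ⟩ₕ^{p-1}·⟨x⟩⁻¹ ≥ 0`. -/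
theorem stmt11 (p : ℕ) (hp : 2 ≤ p) (T h R Cp C : ℝ)
    (hT : 0 < T) (hh : 1 ≤ h) (hR : 1 < R) (hCp : 0 < Cp) (hC : 0 < C)
    (ap : ℝ → ℝ → ℝ)
    (hap_diff : ∀ t ∈ Set.Icc (0:ℝ) T, Differentiable ℝ (ap t))
    (hap_low : ∀ t ∈ Set.Icc (0:ℝ) T, ∀ ξ : ℝ, R ≤ |ξ| →
      Cp * |ξ| ^ (p - 1) ≤ |deriv (ap t) ξ|)
    (ω : ℝ → ℝ)
    (hω : ∀ t ∈ Set.Icc (0:ℝ) T, ∀ ξ : ℝ, R ≤ |ξ| →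
      ω ξ = Real.sign (deriv (ap t) ξ))
    (b : ℝ → ℝ → ℝ → ℂ)
    (hb : ∀ t ∈ Set.Icc (0:ℝ) T, ∀ x ξ : ℝ,
      |(b t x ξ).im| ≤ C * jbh h ξ ^ (p - 1) * (jb x)⁻¹)
    (M : ℝ) (hM : (2:ℝ) ^ (((p:ℝ) - 1) / 2) * C / Cp ≤ M) :
    ∀ t ∈ Set.Icc (0:ℝ) T, ∀ x ξ : ℝ, h * R ≤ |ξ| →
      ((2:ℝ) ^ (-(((p:ℝ) - 1) / 2)) * Cp * M - C) * jbh h ξ ^ (p - 1) * (jb x)⁻¹ ≤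
          -(b t x ξ).im + M * deriv (ap t) ξ * ω (ξ / h) * (jb x)⁻¹ ∧
        0 ≤ ((2:ℝ) ^ (-(((p:ℝ) - 1) / 2)) * Cp * M - C) * jbh h ξ ^ (p - 1) * (jb x)⁻¹ := by
  intro t ht x ξ hξ
  have hR0 : (0:ℝ) < R := lt_trans one_pos hR
  have hh0 : (0:ℝ) < h := lt_of_lt_of_le one_pos hh
  have hhR : h ≤ h * R := by nlinarith
  have hξR : R ≤ |ξ| := le_trans (by nlinarith) hξ
  have hξhR : R ≤ |ξ / h| := by
    rw [abs_div, abs_of_pos hh0, le_div_iff₀ hh0]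
    linarith [hξ]
  have hξ0 : ξ ≠ 0 := by
    intro h0; rw [h0, abs_zero] at hξR; linarith
  set d := deriv (ap t) with hd
  have hdne : ∀ ζ : ℝ, R ≤ |ζ| → d ζ ≠ 0 := by
    intro ζ hζ h0
    have h1 := hap_low t ht ζ hζ
    rw [← hd, h0, abs_zero] at h1
    have hζ0 : (0:ℝ) < |ζ| := lt_of_lt_of_le hR0 hζ
    nlinarith [pow_pos hζ0 (p - 1)]
  have hsign : Real.sign (d (ξ / h)) = Real.sign (d ξ) := by
    have hder : ∀ s : Set ℝ, Convex ℝ s → (∀ ζ ∈ s, R ≤ |ζ|) →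
        ξ ∈ s → ξ / h ∈ s → Real.sign (d (ξ / h)) = Real.sign (d ξ) := by
      intro s hs habs hξs hξhs
      have hf : ∀ ζ ∈ s, HasDerivWithinAt (ap t) (d ζ) s ζ := fun ζ _ =>
        ((hap_diff t ht ζ).hasDerivAt).hasDerivWithinAt
      have hne : ∀ ζ ∈ s, d ζ ≠ (0:ℝ) := fun ζ hζ => hdne ζ (habs ζ hζ)
      rcases hasDerivWithinAt_forall_lt_or_forall_gt_of_forall_ne hs hf hne with H | H
      · rw [Real.sign_of_neg (H _ hξhs), Real.sign_of_neg (H _ hξs)]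
      · rw [Real.sign_of_pos (H _ hξhs), Real.sign_of_pos (H _ hξs)]
    rcases lt_or_gt_of_ne hξ0 with hneg | hpos
    · refine hder (Set.Iic (-R)) (convex_Iic _) ?_ ?_ ?_
      · intro ζ hζ
        have : ζ ≤ -R := hζ
        rw [abs_of_nonpos (by linarith)]; linarith
      · rw [abs_of_neg hneg] at hξR
        simp only [Set.mem_Iic]; linarith
      · have h1 : ξ / h < 0 := div_neg_of_neg_of_pos hneg hh0
        have : |ξ / h| = -(ξ / h) := abs_of_neg h1
        simp only [Set.mem_Iic]
        linarith [this ▸ hξhR]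
    · refine hder (Set.Ici R) (convex_Ici _) ?_ ?_ ?_
      · intro ζ hζ
        have : R ≤ ζ := hζ
        rw [abs_of_nonneg (by linarith)]; exact this
      · have : |ξ| = ξ := abs_of_pos hpos
        simpa [Set.mem_Ici] using this ▸ hξR
      · have h1 : 0 < ξ / h := div_pos hpos hh0
        have : |ξ / h| = ξ / h := abs_of_pos h1
        simpa [Set.mem_Ici] using this ▸ hξhR
  have hωeq : ω (ξ / h) = Real.sign (d ξ) := by
    rw [hω t ht (ξ / h) hξhR, hsign]
  have key : d ξ * ω (ξ / h) = |d ξ| := by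
    rw [hωeq]
    rcases (hdne ξ hξR).lt_or_gt with hneg | hpos
    · rw [Real.sign_of_neg hneg, abs_of_neg hneg]; ring
    · rw [Real.sign_of_pos hpos, abs_of_pos hpos]; ring
  -- numerical facts
  set n := p - 1 with hn
  have hcn : ((n : ℕ) : ℝ) = (p : ℝ) - 1 := by
    rw [hn, Nat.cast_sub (by omega)]; norm_num
  set P := (2:ℝ) ^ (((p:ℝ) - 1) / 2) with hP
  have hPpos : 0 < P := Real.rpow_pos_of_pos (by norm_num) _
  have hPinv : (2:ℝ) ^ (-(((p:ℝ) - 1) / 2)) = P⁻¹ := by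
    rw [hP, ← Real.rpow_neg (by norm_num)]
  have hsqrt2 : Real.sqrt 2 ^ n = P := by
    rw [hP, ← hcn, Real.sqrt_eq_rpow, ← Real.rpow_natCast ((2:ℝ) ^ ((1:ℝ)/2)) n,
      ← Real.rpow_mul (by norm_num)]
    ring_nf
  have hJle : jbh h ξ ^ n ≤ P * |ξ| ^ n := by
    have h1 : jbh h ξ ≤ Real.sqrt 2 * |ξ| := by
      rw [jbh, show Real.sqrt 2 * |ξ| = Real.sqrt (2 * ξ ^ 2) by
        rw [Real.sqrt_mul (by norm_num), Real.sqrt_sq_eq_abs]]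
      apply Real.sqrt_le_sqrt
      have h3 : h ≤ |ξ| := le_trans hhR hξ
      have h4 : h ^ 2 ≤ ξ ^ 2 := by nlinarith [sq_abs ξ]
      linarith
    calc jbh h ξ ^ n ≤ (Real.sqrt 2 * |ξ|) ^ n := by
          apply pow_le_pow_left₀ (Real.sqrt_nonneg _) h1
      _ = P * |ξ| ^ n := by rw [mul_pow, hsqrt2]
  have hJpos : 0 < jbh h ξ ^ n := by
    apply pow_pos
    apply Real.sqrt_pos.2
    nlinarith
  have hXpos : 0 < (jb x)⁻¹ := by
    apply inv_pos.2
    apply Real.sqrt_pos.2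
    nlinarith [sq_nonneg x]
  have hMpos : 0 < M := lt_of_lt_of_le (by positivity) hM
  have hMC : P * C ≤ M * Cp := by
    rw [div_le_iff₀ hCp] at hM; linarith
  have habs : Cp * |ξ| ^ n ≤ |d ξ| := hap_low t ht ξ hξR
  have hcoef : 0 ≤ P⁻¹ * Cp * M - C := by
    rw [sub_nonneg, ← mul_le_mul_iff_right₀ hPpos]
    calc P * C ≤ M * Cp := hMC
      _ = P * (P⁻¹ * Cp * M) := by
          field_simp
  have him : -(C * jbh h ξ ^ n * (jb x)⁻¹) ≤ -(b t x ξ).im := by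
    have := hb t ht x ξ
    have h2 := le_abs_self (b t x ξ).im
    linarith
  have hmain : P⁻¹ * Cp * M * (jbh h ξ ^ n) ≤ M * |d ξ| := by
    have h1 : P⁻¹ * (jbh h ξ ^ n) ≤ |ξ| ^ n := by
      rw [← mul_le_mul_iff_right₀ hPpos, ← mul_assoc, mul_inv_cancel₀ (ne_of_gt hPpos), one_mul]
      exact hJle
    calc P⁻¹ * Cp * M * (jbh h ξ ^ n) = M * (Cp * (P⁻¹ * (jbh h ξ ^ n))) := by ring
      _ ≤ M * (Cp * |ξ| ^ n) := by
          apply mul_le_mul_of_nonneg_left _ (le_of_lt hMpos)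
          exact mul_le_mul_of_nonneg_left h1 (le_of_lt hCp)
      _ ≤ M * |d ξ| := mul_le_mul_of_nonneg_left habs (le_of_lt hMpos)
  constructor
  · have keyM : M * d ξ * ω (ξ / h) = M * |d ξ| := by rw [mul_assoc, key]
    rw [hPinv, keyM]
    have h3 : P⁻¹ * Cp * M * (jbh h ξ ^ n) * (jb x)⁻¹ ≤ M * |d ξ| * (jb x)⁻¹ :=
      mul_le_mul_of_nonneg_right hmain (le_of_lt hXpos)
    have h4 : (P⁻¹ * Cp * M - C) * (jbh h ξ ^ n) * (jb x)⁻¹ =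
        P⁻¹ * Cp * M * (jbh h ξ ^ n) * (jb x)⁻¹ - C * (jbh h ξ ^ n) * (jb x)⁻¹ := by ring
    rw [h4]
    linarith
  · rw [hPinv]
    positivity
end
end

section
/- Let p ≥ 2 and 2 ≤ n ≤ p−1 be integers, T > 0, h ≥ 1, R > 1, C_p > 0, C > 0. Let a_p : [0,T] × ℝ → ℝ be such that ξ ↦ a_p(t,ξ) is differentiable and |∂_ξ a_p(t,ξ)| ≥ C_p·|ξ|^{p−1} for all t ∈ [0,T] and |ξ| ≥ R. Let ω : ℝ → ℝ satisfy ω(ξ) = sgn(∂_ξ a_p(t,ξ)) for all |ξ| ≥ R and all t ∈ [0,T]. Let ψ : ℝ → ℝ satisfy 0 ≤ ψ ≤ 1, ψ(y) = 1 for |y| ≤ 1/2 and ψ(y) = 0 for |y| ≥ 1. Let b : [0,T] × ℝ × ℝ → ℂ satisfy |Im b(t,x,ξ)| ≤ C·⟨ξ⟩_h^{p−n}·⟨x⟩^{−(p−n)/(p−1)} for all t, x, ξ. If M ≥ 2^{(p−1)/2}·C/C_p, then there exists C' > 0 (one may take C' = C·2^{(p−n)/(p−1)}) such that for all t ∈ [0,T],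 x ∈ ℝ, and ξ with |ξ| ≥ hR, one has −Im b(t,x,ξ) + M·∂_ξ a_p(t,ξ)·ω(ξ/h)·⟨ξ⟩_h^{−n+1}·⟨x⟩^{−(p−n)/(p−1)}·ψ(⟨x⟩/⟨ξ⟩_h^{p−1}) ≥ −C'. -/
open MeasureTheory Real

noncomputable section

set_option maxHeartbeats 1000000 in
/-- lower bound for the term of order `p-n` after the `n`-th conjugation.
Under the stated assumptions, if `M ≥ 2^{(p-1)/2}·C/C_p` then there is `C' > 0` such
that for `|ξ| ≥ hR`,
`-Im b + M·∂_ξa_p·ω(ξ/h)·⟨ξ⟩ₕ^{-n+1}·⟨x⟩^{-(p-n)/(p-1)}·ψ(⟨x⟩/⟨ξ⟩ₕ^{p-1}) ≥ -C'`. -/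
theorem stmt12 (p n : ℕ) (hp : 2 ≤ p) (hn2 : 2 ≤ n) (hnp : n ≤ p - 1)
    (T h R Cp C : ℝ)
    (hT : 0 < T) (hh : 1 ≤ h) (hR : 1 < R) (hCp : 0 < Cp) (hC : 0 < C)
    (ap : ℝ → ℝ → ℝ)
    (hap_diff : ∀ t ∈ Set.Icc (0:ℝ) T, Differentiable ℝ (ap t))
    (hap_low : ∀ t ∈ Set.Icc (0:ℝ) T, ∀ ξ : ℝ, R ≤ |ξ| →
      Cp * |ξ| ^ (p - 1) ≤ |deriv (ap t) ξ|)
    (ω : ℝ → ℝ)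
    (hω : ∀ t ∈ Set.Icc (0:ℝ) T, ∀ ξ : ℝ, R ≤ |ξ| →
      ω ξ = Real.sign (deriv (ap t) ξ))
    (ψ : ℝ → ℝ) (hψ01 : ∀ y : ℝ, 0 ≤ ψ y ∧ ψ y ≤ 1)
    (hψ1 : ∀ y : ℝ, |y| ≤ 1 / 2 → ψ y = 1)
    (hψ0 : ∀ y : ℝ, 1 ≤ |y| → ψ y = 0)
    (b : ℝ → ℝ → ℝ → ℂ)
    (hb : ∀ t ∈ Set.Icc (0:ℝ) T, ∀ x ξ : ℝ,
      |(b t x ξ).im| ≤ C * jbh h ξ ^ ((p:ℝ) - n) * jb x ^ (-(((p:ℝ) - n) / ((p:ℝ) - 1))))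
    (M : ℝ) (hM : (2:ℝ) ^ (((p:ℝ) - 1) / 2) * C / Cp ≤ M) :
    ∃ C' > 0, ∀ t ∈ Set.Icc (0:ℝ) T, ∀ x ξ : ℝ, h * R ≤ |ξ| →
      -C' ≤ -(b t x ξ).im +
        M * deriv (ap t) ξ * ω (ξ / h) * jbh h ξ ^ (-(n:ℝ) + 1) *
          jb x ^ (-(((p:ℝ) - n) / ((p:ℝ) - 1))) *
          ψ (jb x / jbh h ξ ^ ((p:ℝ) - 1)) := by
  have hp1 : (1:ℕ) ≤ p := by omega
  have hpR : (2:ℝ) ≤ (p:ℝ) := by exact_mod_cast hp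
  have hP1 : (0:ℝ) < (p:ℝ) - 1 := by linarith
  have hnp' : n + 1 ≤ p := by omega
  have hPn : (1:ℝ) ≤ (p:ℝ) - n := by
    have : ((n:ℝ) + 1) ≤ (p:ℝ) := by exact_mod_cast hnp'
    linarith
  set q : ℝ := ((p:ℝ) - n) / ((p:ℝ) - 1) with hqdef
  have hq0 : 0 < q := div_pos (by linarith) hP1
  have hq1 : ((p:ℝ) - 1) * q = (p:ℝ) - n := by
    rw [hqdef]; field_simp
  refine ⟨C * 2 ^ q, by positivity, ?_⟩
  intro t ht x ξ hξ
  have hR0 : (0:ℝ) < R := by linarith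
  have hh0 : (0:ℝ) < h := by linarith
  have hξR : R ≤ |ξ| := le_trans (by nlinarith) hξ
  have hhξ : h ≤ |ξ| := le_trans (by nlinarith) hξ
  have hξ0 : (0:ℝ) < |ξ| := by linarith
  -- basic facts about the brackets
  have hJpos : 0 < jbh h ξ := Real.sqrt_pos.mpr (by nlinarith)
  have hXpos : 0 < jb x := Real.sqrt_pos.mpr (by nlinarith)
  have hJP1pos : 0 < jbh h ξ ^ ((p:ℝ) - 1) := Real.rpow_pos_of_pos hJpos _
  have hXqpos : 0 < jb x ^ (-q) := Real.rpow_pos_of_pos hXpos _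
  -- the sign fact : deriv (ap t) ξ * ω (ξ / h) = |deriv (ap t) ξ|
  have hξh : R ≤ |ξ / h| := by
    rw [abs_div, abs_of_pos hh0, le_div_iff₀ hh0]; linarith
  have hmem : ∀ y ∈ Set.uIcc ξ (ξ / h), R ≤ |y| := by
    intro y hy
    rw [Set.mem_uIcc] at hy
    rcases lt_trichotomy ξ 0 with hneg | hzero | hpos
    · have h1 : ξ / h < 0 := div_neg_of_neg_of_pos hneg hh0
      have h2 : ξ / h ≤ -R := by
        have := hξh; rw [abs_of_neg h1] at this; linarith
      have hy2 : y ≤ ξ / h := by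
        rcases hy with ⟨_, h5⟩ | ⟨h4, _⟩
        · exact h5
        · have : ξ ≤ ξ / h := by
            rw [le_div_iff₀ hh0]; nlinarith
          linarith
      have : y < 0 := by linarith
      rw [abs_of_neg this]; linarith
    · exfalso; rw [hzero] at hξ0; simp at hξ0
    · have h1 : 0 < ξ / h := div_pos hpos hh0
      have h2 : R ≤ ξ / h := by
        have := hξh; rwa [abs_of_pos h1] at this
      have hy2 : ξ / h ≤ y := by
        rcases hy with ⟨h4, _⟩ | ⟨h4, _⟩
        · have : ξ / h ≤ ξ := by
            rw [div_le_iff₀ hh0]; nlinarith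
          linarith
        · exact h4
      have : 0 < y := by linarith
      rw [abs_of_pos this]; linarith
  have hderiv_ne : ∀ y ∈ Set.uIcc ξ (ξ / h), deriv (ap t) y ≠ 0 := by
    intro y hy
    have h1 := hap_low t ht y (hmem y hy)
    have h2 : 0 < |y| := by have := hmem y hy; linarith
    have : 0 < Cp * |y| ^ (p - 1) := by positivity
    intro hcon
    rw [hcon] at h1; simp at h1; linarith
  have hdarboux := hasDerivWithinAt_forall_lt_or_forall_gt_of_forall_ne
    (convex_uIcc ξ (ξ / h))
    (f' := deriv (ap t))
    (fun y _ => ((hap_diff t ht) y).hasDerivAt.hasDerivWithinAt) (m := 0)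
    hderiv_ne
  have hωval : ω (ξ / h) = Real.sign (deriv (ap t) (ξ / h)) := hω t ht _ hξh
  have hsign : deriv (ap t) ξ * ω (ξ / h) = |deriv (ap t) ξ| := by
    rcases hdarboux with hall | hall
    · have h1 : deriv (ap t) ξ < 0 := hall ξ Set.left_mem_uIcc
      have h2 : deriv (ap t) (ξ / h) < 0 := hall _ Set.right_mem_uIcc
      rw [hωval, Real.sign_of_neg h2, abs_of_neg h1]; ring
    · have h1 : 0 < deriv (ap t) ξ := hall ξ Set.left_mem_uIcc
      have h2 : 0 < deriv (ap t) (ξ / h) := hall _ Set.right_mem_uIcc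
      rw [hωval, Real.sign_of_pos h2, abs_of_pos h1]; ring
  set A := deriv (ap t) ξ with hAdef
  have hM0 : 0 ≤ M := le_trans (by positivity) hM
  have habs : Cp * |ξ| ^ (p - 1) ≤ |A| := hap_low t ht ξ hξR
  -- key bound : C * J^(p-1) ≤ M * |A|
  have hJle : jbh h ξ ≤ Real.sqrt 2 * |ξ| := by
    have h1 : h ^ 2 + ξ ^ 2 ≤ 2 * ξ ^ 2 := by nlinarith [sq_abs ξ]
    calc jbh h ξ ≤ Real.sqrt (2 * ξ ^ 2) := Real.sqrt_le_sqrt h1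
      _ = Real.sqrt 2 * |ξ| := by
          rw [Real.sqrt_mul (by norm_num), Real.sqrt_sq_eq_abs]
  have hxcast : |ξ| ^ ((p:ℝ) - 1) = |ξ| ^ (p - 1) := by
    rw [← Real.rpow_natCast |ξ| (p - 1)]
    congr 1
    push_cast [Nat.cast_sub hp1]
    ring
  have hJP1 : jbh h ξ ^ ((p:ℝ) - 1) ≤ 2 ^ (((p:ℝ) - 1) / 2) * |ξ| ^ ((p:ℝ) - 1) := by
    calc jbh h ξ ^ ((p:ℝ) - 1) ≤ (Real.sqrt 2 * |ξ|) ^ ((p:ℝ) - 1) :=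
          Real.rpow_le_rpow hJpos.le hJle (by linarith)
      _ = (Real.sqrt 2) ^ ((p:ℝ) - 1) * |ξ| ^ ((p:ℝ) - 1) :=
          Real.mul_rpow (Real.sqrt_nonneg 2) (abs_nonneg ξ)
      _ = 2 ^ (((p:ℝ) - 1) / 2) * |ξ| ^ ((p:ℝ) - 1) := by
          rw [Real.sqrt_eq_rpow, ← Real.rpow_mul (by norm_num : (0:ℝ) ≤ 2)]
          ring_nf
  have hMC : 2 ^ (((p:ℝ) - 1) / 2) * C ≤ M * Cp := by
    rw [div_le_iff₀ hCp] at hM; linarith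
  have hCJ : C * jbh h ξ ^ ((p:ℝ) - 1) ≤ M * |A| := by
    have hxp : (0:ℝ) ≤ |ξ| ^ ((p:ℝ) - 1) := Real.rpow_nonneg (abs_nonneg ξ) _
    have h1 : C * jbh h ξ ^ ((p:ℝ) - 1) ≤ C * (2 ^ (((p:ℝ) - 1) / 2) * |ξ| ^ ((p:ℝ) - 1)) :=
      mul_le_mul_of_nonneg_left hJP1 hC.le
    have h2 : 2 ^ (((p:ℝ) - 1) / 2) * C * |ξ| ^ ((p:ℝ) - 1) ≤ M * Cp * |ξ| ^ ((p:ℝ) - 1) :=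
      mul_le_mul_of_nonneg_right hMC hxp
    have h3 : M * (Cp * |ξ| ^ (p - 1)) ≤ M * |A| := mul_le_mul_of_nonneg_left habs hM0
    rw [← hxcast] at h3
    nlinarith
  -- split in the two exponents of J
  have hJsplit : jbh h ξ ^ ((p:ℝ) - n)
      = jbh h ξ ^ ((p:ℝ) - 1) * jbh h ξ ^ (-(n:ℝ) + 1) := by
    rw [← Real.rpow_add hJpos]
    congr 1; ring
  have hbnd := hb t ht x ξ
  by_cases hcase : 2 * jb x < jbh h ξ ^ ((p:ℝ) - 1)
  · -- here ψ = 1 and the M-term dominates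
    have hψval : ψ (jb x / jbh h ξ ^ ((p:ℝ) - 1)) = 1 := by
      apply hψ1
      rw [abs_of_pos (div_pos hXpos hJP1pos), div_le_iff₀ hJP1pos]
      linarith
    rw [hψval, mul_one, mul_assoc M A, hsign]
    have him : (b t x ξ).im ≤ C * jbh h ξ ^ ((p:ℝ) - n) * jb x ^ (-q) :=
      le_trans (le_abs_self _) hbnd
    have hdom : C * jbh h ξ ^ ((p:ℝ) - n) * jb x ^ (-q)
        ≤ M * |A| * jbh h ξ ^ (-(n:ℝ) + 1) * jb x ^ (-q) := by
      apply mul_le_mul_of_nonneg_right _ hXqpos.le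
      rw [hJsplit, ← mul_assoc]
      exact mul_le_mul_of_nonneg_right hCJ (Real.rpow_pos_of_pos hJpos _).le
    have hpos : (0:ℝ) < C * 2 ^ q := by positivity
    linarith
  · -- here the M-term is nonnegative and Im b is small
    push_neg at hcase
    have hterm : 0 ≤ M * A * ω (ξ / h) * jbh h ξ ^ (-(n:ℝ) + 1) * jb x ^ (-q) *
        ψ (jb x / jbh h ξ ^ ((p:ℝ) - 1)) := by
      rw [mul_assoc M A, hsign]
      have hψnn := (hψ01 (jb x / jbh h ξ ^ ((p:ℝ) - 1))).1
      have := abs_nonneg A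
      positivity
    have him : -(C * jbh h ξ ^ ((p:ℝ) - n) * jb x ^ (-q)) ≤ -(b t x ξ).im := by
      have := le_abs_self (b t x ξ).im
      linarith
    have hkey : C * jbh h ξ ^ ((p:ℝ) - n) * jb x ^ (-q) ≤ C * 2 ^ q := by
      have hJn : jbh h ξ ^ ((p:ℝ) - n) ≤ 2 ^ q * jb x ^ q := by
        calc jbh h ξ ^ ((p:ℝ) - n) = (jbh h ξ ^ ((p:ℝ) - 1)) ^ q := by
              rw [← Real.rpow_mul hJpos.le, hq1]
          _ ≤ (2 * jb x) ^ q := Real.rpow_le_rpow hJP1pos.le hcase hq0.le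
          _ = 2 ^ q * jb x ^ q := Real.mul_rpow (by norm_num) hXpos.le
      have hXX : jb x ^ q * jb x ^ (-q) = 1 := by
        rw [← Real.rpow_add hXpos]; simp
      calc C * jbh h ξ ^ ((p:ℝ) - n) * jb x ^ (-q)
          ≤ C * (2 ^ q * jb x ^ q) * jb x ^ (-q) := by
            exact mul_le_mul_of_nonneg_right
              (mul_le_mul_of_nonneg_left hJn hC.le) hXqpos.le
        _ = C * 2 ^ q * (jb x ^ q * jb x ^ (-q)) := by ring
        _ = C * 2 ^ q := by rw [hXX, mul_one]
    linarith
end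
end
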